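/- arXiv:2004.04369 — 10 statements merged into one kernel-verified Lean document; each statement's English description precedes it below -/
import Mathlib

section
/- Let J be a nonzero real d×d matrix. The map from ℝ^d × ℝ to (d+1)×(d+1) real matrices sending (v,t) to the matrix exponential of the block matrix fromBlocks [[0,0],[v, t·J]] is injective if and only if the complexification of J (the matrix J with entries viewed in ℂ) has no eigenvalue that is nonzero and purely imaginary. -/
open scoped Matrix
open NormedSpace

noncomputable section

/-- `S(A) = ∑_{n ≥ 0} Aⁿ/(n+1)!`, the power series with `A * S(A) = exp A - 1`. -/
def matS {d : ℕ} (A : Matrix (Fin d) (Fin d) ℝ) : Matrix (Fin d) (Fin d) ℝ :=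
  ∑' n : ℕ, (((n + 1).factorial : ℝ))⁻¹ • A ^ n

def Sgen (𝕂 : Type*) {𝔸 : Type*} [Field 𝕂] [Ring 𝔸] [Algebra 𝕂 𝔸] [TopologicalSpace 𝔸]
    (A : 𝔸) : 𝔸 :=
  ∑' n : ℕ, (((n + 1).factorial : 𝕂))⁻¹ • A ^ n

section Normed
variable {𝕂 𝔸 : Type*} [RCLike 𝕂] [NormedRing 𝔸] [NormedAlgebra 𝕂 𝔸] [CompleteSpace 𝔸]

lemma Sgen_summable (A : 𝔸) :
    Summable fun n : ℕ => (((n + 1).factorial : 𝕂))⁻¹ • A ^ n := by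
  refine Summable.of_norm ?_
  refine Summable.of_nonneg_of_le (fun n => norm_nonneg _) (fun n => ?_)
    (NormedSpace.norm_expSeries_summable' (𝕂 := 𝕂) A)
  rw [norm_smul, norm_smul, norm_inv, norm_inv, RCLike.norm_natCast, RCLike.norm_natCast]
  refine mul_le_mul_of_nonneg_right ?_ (norm_nonneg _)
  refine inv_anti₀ (Nat.cast_pos.mpr n.factorial_pos) ?_
  exact_mod_cast Nat.factorial_le (Nat.le_succ n)

lemma hasSum_Sgen (A : 𝔸) :
    HasSum (fun n : ℕ => (((n + 1).factorial : 𝕂))⁻¹ • A ^ n) (Sgen 𝕂 A) :=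
  (Sgen_summable A).hasSum

lemma exp_eq_one_add_mul_Sgen (A : 𝔸) : exp A = 1 + A * Sgen 𝕂 A := by
  have he : exp A = ∑' n : ℕ, ((n.factorial : 𝕂))⁻¹ • A ^ n := by
    rw [exp_eq_tsum (𝕂 := 𝕂)]
  rw [he, Summable.tsum_eq_zero_add (NormedSpace.expSeries_summable' (𝕂 := 𝕂) A)]
  simp only [pow_zero, Nat.factorial_zero, Nat.cast_one, inv_one, one_smul]
  congr 1
  have h : ∀ n : ℕ, (((n + 1).factorial : 𝕂))⁻¹ • A ^ (n + 1)
      = A * ((((n + 1).factorial : 𝕂))⁻¹ • A ^ n) := fun n => by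
    rw [pow_succ', mul_smul_comm]
  simp only [h]
  rw [(Sgen_summable (𝕂 := 𝕂) A).tsum_mul_left A]
  rfl

lemma Sgen_mul_self_comm (A : 𝔸) : A * Sgen 𝕂 A = Sgen 𝕂 A * A := by
  rw [Sgen, ← (Sgen_summable (𝕂 := 𝕂) A).tsum_mul_left A,
    ← (Sgen_summable (𝕂 := 𝕂) A).tsum_mul_right A]
  refine tsum_congr fun n => ?_
  rw [mul_smul_comm, smul_mul_assoc, ← pow_succ, ← pow_succ']

end Normed
section Scalar

lemma Sgen_zero_scalar : Sgen ℂ (0 : ℂ) = 1 := by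
  rw [Sgen, tsum_eq_single 0]
  · simp
  · intro n hn
    rcases Nat.exists_eq_succ_of_ne_zero hn with ⟨m, rfl⟩
    simp [pow_succ]

lemma mul_Sgen_scalar (z : ℂ) : z * Sgen ℂ z = Complex.exp z - 1 := by
  have := exp_eq_one_add_mul_Sgen (𝕂 := ℂ) z
  rw [← Complex.exp_eq_exp_ℂ] at this
  rw [this]; ring

lemma Sgen_scalar_eq_zero_iff (z : ℂ) :
    Sgen ℂ z = 0 ↔ z ≠ 0 ∧ Complex.exp z = 1 := by
  constructor
  · intro h
    have hz : z ≠ 0 := by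
      rintro rfl
      rw [Sgen_zero_scalar] at h
      exact one_ne_zero h
    refine ⟨hz, ?_⟩
    have := mul_Sgen_scalar z
    rw [h, mul_zero] at this
    linear_combination -this
  · rintro ⟨hz, he⟩
    have := mul_Sgen_scalar z
    rw [he, sub_self] at this
    exact (mul_eq_zero.mp this).resolve_left hz

end Scalar
section MatrixLemmas

lemma hasSum_Sgen_matrix (𝕂 : Type*) [RCLike 𝕂] {m : Type*} [Fintype m] [DecidableEq m]
    (A : Matrix m m 𝕂) :
    HasSum (fun n : ℕ => (((n + 1).factorial : 𝕂))⁻¹ • A ^ n) (Sgen 𝕂 A) := by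
  letI : SeminormedRing (Matrix m m 𝕂) := Matrix.linftyOpSemiNormedRing
  letI : NormedRing (Matrix m m 𝕂) := Matrix.linftyOpNormedRing
  letI : NormedAlgebra 𝕂 (Matrix m m 𝕂) := Matrix.linftyOpNormedAlgebra
  haveI : CompleteSpace (Matrix m m 𝕂) := by infer_instance
  exact @hasSum_Sgen _ _ _ _ _ this A

lemma exp_eq_one_add_mul_Sgen_matrix (𝕂 : Type*) [RCLike 𝕂] {m : Type*} [Fintype m]
    [DecidableEq m] (A : Matrix m m 𝕂) : exp A = 1 + A * Sgen 𝕂 A := by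
  letI : SeminormedRing (Matrix m m 𝕂) := Matrix.linftyOpSemiNormedRing
  letI : NormedRing (Matrix m m 𝕂) := Matrix.linftyOpNormedRing
  letI : NormedAlgebra 𝕂 (Matrix m m 𝕂) := Matrix.linftyOpNormedAlgebra
  haveI : CompleteSpace (Matrix m m 𝕂) := by infer_instance
  exact @exp_eq_one_add_mul_Sgen _ _ _ _ _ this A

lemma Sgen_mul_self_comm_matrix (𝕂 : Type*) [RCLike 𝕂] {m : Type*} [Fintype m]
    [DecidableEq m] (A : Matrix m m 𝕂) : A * Sgen 𝕂 A = Sgen 𝕂 A * A := by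
  letI : SeminormedRing (Matrix m m 𝕂) := Matrix.linftyOpSemiNormedRing
  letI : NormedRing (Matrix m m 𝕂) := Matrix.linftyOpNormedRing
  letI : NormedAlgebra 𝕂 (Matrix m m 𝕂) := Matrix.linftyOpNormedAlgebra
  haveI : CompleteSpace (Matrix m m 𝕂) := by infer_instance
  exact @Sgen_mul_self_comm _ _ _ _ _ this A

variable {d : ℕ}

lemma pow_mulVec_eigen {A : Matrix (Fin d) (Fin d) ℂ} {u : Fin d → ℂ} {μ : ℂ}
    (h : A *ᵥ u = μ • u) (n : ℕ) : A ^ n *ᵥ u = μ ^ n • u := by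
  induction n with
  | zero => simp
  | succ n ih =>
    rw [pow_succ', ← Matrix.mulVec_mulVec, ih, Matrix.mulVec_smul, h, smul_smul, ← pow_succ]

lemma Sgen_mulVec_eigen (A : Matrix (Fin d) (Fin d) ℂ) {u : Fin d → ℂ} {μ : ℂ}
    (h : A *ᵥ u = μ • u) : Sgen ℂ A *ᵥ u = Sgen ℂ μ • u := by
  have h1 := hasSum_Sgen_matrix ℂ A
  have h2 : HasSum (fun n : ℕ => ((((n + 1).factorial : ℂ))⁻¹ • A ^ n) *ᵥ u)
      (Sgen ℂ A *ᵥ u) := by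
    refine h1.map (AddMonoidHom.mk' (fun M : Matrix (Fin d) (Fin d) ℂ => M *ᵥ u)
      (fun M N => Matrix.add_mulVec M N u)) ?_
    exact Continuous.matrix_mulVec continuous_id continuous_const
  have h3 : HasSum (fun n : ℕ => ((((n + 1).factorial : ℂ))⁻¹ • A ^ n) *ᵥ u)
      ((Sgen ℂ μ) • u) := by
    have hs := (hasSum_Sgen (𝕂 := ℂ) (𝔸 := ℂ) μ).smul_const u
    convert hs using 2 with n
    rw [Matrix.smul_mulVec, pow_mulVec_eigen h, smul_smul, smul_eq_mul]
  exact h2.unique h3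

lemma map_Sgen (M : Matrix (Fin d) (Fin d) ℝ) :
    (Sgen ℝ M).map Complex.ofReal = Sgen ℂ (M.map Complex.ofReal) := by
  have h1 := hasSum_Sgen_matrix ℝ M
  have h2 : HasSum (fun n : ℕ => ((((n + 1).factorial : ℝ))⁻¹ • M ^ n).map Complex.ofReal)
      ((Sgen ℝ M).map Complex.ofReal) := by
    refine h1.map (AddMonoidHom.mapMatrix Complex.ofRealHom.toAddMonoidHom) ?_
    exact Continuous.matrix_map continuous_id Complex.continuous_ofReal
  have h3 := hasSum_Sgen_matrix ℂ (M.map Complex.ofReal)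
  refine h2.unique ?_
  convert h3 using 2 with n
  have hp : ((M ^ n).map Complex.ofReal) = (M.map Complex.ofReal) ^ n := by
    exact map_pow (Complex.ofRealHom.mapMatrix) M n
  rw [← hp]
  ext i j
  simp [Matrix.map_apply, Matrix.smul_apply, Complex.ofReal_mul, Complex.ofReal_inv,
    Complex.ofReal_natCast]
section Blocks

variable {X : Type*} {l m n o R : Type*} [AddCommGroup R] [TopologicalSpace R]

lemma hasSum_fromBlocks {f : X → Matrix n l R} {g : X → Matrix n m R} {h : X → Matrix o l R}
    {k : X → Matrix o m R} {A : Matrix n l R} {B : Matrix n m R} {C : Matrix o l R}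
    {D : Matrix o m R} (hf : HasSum f A) (hg : HasSum g B) (hh : HasSum h C)
    (hk : HasSum k D) :
    HasSum (fun x => Matrix.fromBlocks (f x) (g x) (h x) (k x))
      (Matrix.fromBlocks A B C D) := by
  have hp : HasSum (fun x => (f x, g x, h x, k x)) (A, B, C, D) :=
    hf.prodMk (hg.prodMk (hh.prodMk hk))
  let φ : (Matrix n l R × Matrix n m R × Matrix o l R × Matrix o m R)
      →+ Matrix (n ⊕ o) (l ⊕ m) R :=
    AddMonoidHom.mk' (fun p => Matrix.fromBlocks p.1 p.2.1 p.2.2.1 p.2.2.2)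
      (by
        rintro ⟨a, b, c, e⟩ ⟨a', b', c', e'⟩
        simp only [Prod.fst_add, Prod.snd_add]
        exact (Matrix.fromBlocks_add a b c e a' b' c' e').symm)
  have hcont : Continuous φ :=
    Continuous.matrix_fromBlocks continuous_fst
      (continuous_fst.comp continuous_snd)
      (continuous_fst.comp (continuous_snd.comp continuous_snd))
      (continuous_snd.comp (continuous_snd.comp continuous_snd))
  exact hp.map φ hcont

end Blocks

section BlockExp

variable {d : ℕ}

lemma fromBlocks_pow_succ (C : Matrix (Fin d) (Fin 1) ℝ) (D : Matrix (Fin d) (Fin d) ℝ)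
    (n : ℕ) :
    (Matrix.fromBlocks (0 : Matrix (Fin 1) (Fin 1) ℝ) 0 C D) ^ (n + 1)
      = Matrix.fromBlocks 0 0 (D ^ n * C) (D ^ (n + 1)) := by
  induction n with
  | zero => simp
  | succ n ih =>
    rw [pow_succ, ih, Matrix.fromBlocks_multiply]
    simp [← pow_succ]

lemma exp_fromBlocks (C : Matrix (Fin d) (Fin 1) ℝ) (D : Matrix (Fin d) (Fin d) ℝ) :
    exp (Matrix.fromBlocks (0 : Matrix (Fin 1) (Fin 1) ℝ) 0 C D)
      = Matrix.fromBlocks 1 0 (Sgen ℝ D * C) (exp D) := by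
  letI : SeminormedRing (Matrix (Fin 1 ⊕ Fin d) (Fin 1 ⊕ Fin d) ℝ) :=
    Matrix.linftyOpSemiNormedRing
  letI : NormedRing (Matrix (Fin 1 ⊕ Fin d) (Fin 1 ⊕ Fin d) ℝ) := Matrix.linftyOpNormedRing
  letI : NormedAlgebra ℝ (Matrix (Fin 1 ⊕ Fin d) (Fin 1 ⊕ Fin d) ℝ) :=
    Matrix.linftyOpNormedAlgebra
  letI : SeminormedRing (Matrix (Fin d) (Fin d) ℝ) := Matrix.linftyOpSemiNormedRing
  letI : NormedRing (Matrix (Fin d) (Fin d) ℝ) := Matrix.linftyOpNormedRing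
  letI : NormedAlgebra ℝ (Matrix (Fin d) (Fin d) ℝ) := Matrix.linftyOpNormedAlgebra
  haveI : CompleteSpace (Matrix (Fin d) (Fin d) ℝ) := by infer_instance
  haveI : CompleteSpace (Matrix (Fin 1 ⊕ Fin d) (Fin 1 ⊕ Fin d) ℝ) := by infer_instance
  set M := Matrix.fromBlocks (0 : Matrix (Fin 1) (Fin 1) ℝ) 0 C D with hM
  have he : exp M = ∑' n : ℕ, ((n.factorial : ℝ))⁻¹ • M ^ n := by rw [exp_eq_tsum (𝕂 := ℝ)]
  rw [he]
  refine HasSum.tsum_eq ?_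
  -- the shifted series
  have hD : HasSum (fun n : ℕ => (((n + 1).factorial : ℝ))⁻¹ • D ^ (n + 1))
      (exp D - 1) := by
    have hDfull : HasSum (fun n : ℕ => ((n.factorial : ℝ))⁻¹ • D ^ n) (exp D) := by
      have := (NormedSpace.expSeries_summable' (𝕂 := ℝ) D).hasSum
      have heD : exp D = ∑' n : ℕ, ((n.factorial : ℝ))⁻¹ • D ^ n := by rw [exp_eq_tsum (𝕂 := ℝ)]
      rw [heD]; exact this
    have := (hasSum_nat_add_iff'
      (f := fun n : ℕ => ((n.factorial : ℝ))⁻¹ • D ^ n) (g := exp D) 1).mpr hDfull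
    simpa using this
  have hC : HasSum (fun n : ℕ => (((n + 1).factorial : ℝ))⁻¹ • (D ^ n * C))
      (Sgen ℝ D * C) := by
    have h1 := hasSum_Sgen_matrix ℝ D
    have h2 := h1.map (AddMonoidHom.mk' (fun X : Matrix (Fin d) (Fin d) ℝ => X * C)
      (fun X Y => Matrix.add_mul X Y C)) (Continuous.matrix_mul continuous_id continuous_const)
    simpa [Function.comp_def, smul_mul_assoc] using h2
  have key : HasSum (fun n : ℕ => (((n + 1).factorial : ℝ))⁻¹ • M ^ (n + 1))
      (Matrix.fromBlocks 1 0 (Sgen ℝ D * C) (exp D) - 1) := by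
    have hfb := hasSum_fromBlocks
      (hasSum_zero : HasSum (fun _ : ℕ => (0 : Matrix (Fin 1) (Fin 1) ℝ)) 0)
      (hasSum_zero : HasSum (fun _ : ℕ => (0 : Matrix (Fin 1) (Fin d) ℝ)) 0) hC hD
    have hfb1 : (Matrix.fromBlocks (0 : Matrix (Fin 1) (Fin 1) ℝ) 0 (Sgen ℝ D * C)
        (exp D - 1))
        = Matrix.fromBlocks 1 0 (Sgen ℝ D * C) (exp D) - 1 := by
      rw [← Matrix.fromBlocks_one]
      ext (i | i) (j | j) <;> simp [Matrix.fromBlocks]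
    rw [← hfb1]
    convert hfb using 2 with n
    rw [fromBlocks_pow_succ, Matrix.fromBlocks_smul]
    simp
  have hfin := (hasSum_nat_add_iff'
    (f := fun n : ℕ => ((n.factorial : ℝ))⁻¹ • M ^ n)
    (g := Matrix.fromBlocks (1 : Matrix (Fin 1) (Fin 1) ℝ) 0 (Sgen ℝ D * C) (exp D)) 1).mp
  refine hfin ?_
  convert key using 1
  · rfl
  · simp

end BlockExp
section Spectral

variable {d : ℕ}

lemma mem_spectrum_iff_eigen (A : Matrix (Fin d) (Fin d) ℂ) (μ : ℂ) :
    μ ∈ spectrum ℂ A ↔ ∃ u : Fin d → ℂ, u ≠ 0 ∧ A *ᵥ u = μ • u := by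
  rw [spectrum.mem_iff, Matrix.isUnit_iff_isUnit_det, isUnit_iff_ne_zero, not_ne_iff,
    ← Matrix.exists_mulVec_eq_zero_iff]
  have key : ∀ u : Fin d → ℂ,
      (algebraMap ℂ (Matrix (Fin d) (Fin d) ℂ) μ - A) *ᵥ u = 0 ↔ A *ᵥ u = μ • u := by
    intro u
    rw [Matrix.sub_mulVec, Algebra.algebraMap_eq_smul_one, Matrix.smul_mulVec,
      Matrix.one_mulVec, sub_eq_zero, eq_comm]
  constructor
  · rintro ⟨u, hu, h⟩; exact ⟨u, hu, (key u).mp h⟩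
  · rintro ⟨u, hu, h⟩; exact ⟨u, hu, (key u).mpr h⟩

lemma det_Sgen_complex (M : Matrix (Fin d) (Fin d) ℝ) :
    (Sgen ℂ (M.map Complex.ofReal)).det = ((Sgen ℝ M).det : ℂ) := by
  rw [← map_Sgen]
  rw [show (Sgen ℝ M).map Complex.ofReal = Complex.ofRealHom.mapMatrix (Sgen ℝ M) from rfl]
  exact (RingHom.map_det Complex.ofRealHom _).symm

set_option maxHeartbeats 1000000 in
/-- The core lemma: if `J` has no nonzero purely imaginary complex eigenvalue, then
`S(tJ)` is nonsingular (over `ℂ`) for every real `t`. -/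
lemma det_Sgen_ne_zero (J : Matrix (Fin d) (Fin d) ℝ)
    (hspec : ¬∃ z ∈ spectrum ℂ (J.map Complex.ofReal), z ≠ 0 ∧ z.re = 0) (t : ℝ) :
    (Sgen ℂ ((t • J).map Complex.ofReal)).det ≠ 0 := by
  set A : Matrix (Fin d) (Fin d) ℂ := (t • J).map Complex.ofReal with hA
  intro hdet
  obtain ⟨w, hw0, hw⟩ := Matrix.exists_mulVec_eq_zero_iff.mpr hdet
  set B := Sgen ℂ A with hB
  set K : Submodule ℂ (Fin d → ℂ) := LinearMap.ker B.mulVecLin with hK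
  have hwK : w ∈ K := by
    simp only [hK, LinearMap.mem_ker, Matrix.mulVecLin_apply]
    exact hw
  haveI hKnt : Nontrivial K := by
    refine nontrivial_of_ne ⟨w, hwK⟩ 0 ?_
    simp only [ne_eq, Submodule.mk_eq_zero]
    exact hw0
  have hinv : ∀ x ∈ K, A.mulVecLin x ∈ K := by
    intro x hx
    simp only [hK, LinearMap.mem_ker, Matrix.mulVecLin_apply] at hx ⊢
    rw [Matrix.mulVec_mulVec, ← Sgen_mul_self_comm_matrix ℂ A, ← Matrix.mulVec_mulVec, hx,
      Matrix.mulVec_zero]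
  let f : Module.End ℂ K := (A.mulVecLin).restrict hinv
  obtain ⟨μ, hμ⟩ := Module.End.exists_eigenvalue f
  obtain ⟨v, hv⟩ := hμ.exists_hasEigenvector
  have hv0 : (v : Fin d → ℂ) ≠ 0 := by
    intro h
    exact hv.2 (by exact_mod_cast Subtype.ext h)
  have hAv : A *ᵥ (v : Fin d → ℂ) = μ • (v : Fin d → ℂ) := by
    have h1 : A.mulVecLin (v : Fin d → ℂ) = ((f v : K) : Fin d → ℂ) :=
      (LinearMap.restrict_coe_apply _ _ _).symm
    rw [hv.apply_eq_smul] at h1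
    rw [← Matrix.mulVecLin_apply, h1]
    rfl
  have hBv : B *ᵥ (v : Fin d → ℂ) = 0 := by
    have := v.2
    simp only [hK, LinearMap.mem_ker, Matrix.mulVecLin_apply] at this
    exact this
  rw [hB, Sgen_mulVec_eigen A hAv] at hBv
  have hSμ : Sgen ℂ μ = 0 := (smul_eq_zero.mp hBv).resolve_right hv0
  obtain ⟨hμ0, hexp⟩ := (Sgen_scalar_eq_zero_iff μ).mp hSμ
  obtain ⟨k, hk⟩ := Complex.exp_eq_one_iff.mp hexp
  have hre : μ.re = 0 := by
    rw [hk]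
    simp [Complex.mul_re]
  have hAeq : A = (t : ℂ) • (J.map Complex.ofReal) := by
    ext i j
    simp [hA, Matrix.map_apply, Matrix.smul_apply, Complex.ofReal_mul]
  have ht : t ≠ 0 := by
    rintro rfl
    rw [hAeq] at hAv
    simp only [Complex.ofReal_zero, zero_smul, Matrix.zero_mulVec] at hAv
    exact hμ0 ((smul_eq_zero.mp hAv.symm).resolve_right hv0)
  have htc : (t : ℂ) ≠ 0 := by exact_mod_cast ht
  refine hspec ⟨μ / t, ?_, ?_, ?_⟩
  · rw [mem_spectrum_iff_eigen]
    refine ⟨v, hv0, ?_⟩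
    rw [hAeq, Matrix.smul_mulVec] at hAv
    have h2 : (J.map Complex.ofReal) *ᵥ (v : Fin d → ℂ) = (t : ℂ)⁻¹ • μ • (v : Fin d → ℂ) := by
      rw [← hAv, smul_smul, inv_mul_cancel₀ htc, one_smul]
    rw [h2, smul_smul, inv_mul_eq_div]
  · exact div_ne_zero hμ0 htc
  · rw [Complex.div_re]
    simp [hre, Complex.ofReal_re, Complex.ofReal_im]

end Spectral
section Main

variable {d : ℕ}

lemma mul_col (M : Matrix (Fin d) (Fin d) ℝ) (v : Fin d → ℝ) :
    M * (Matrix.of fun i (_ : Fin 1) => v i) = Matrix.of fun i (_ : Fin 1) => (M *ᵥ v) i := by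
  ext i j
  simp [Matrix.mul_apply, Matrix.mulVec, dotProduct]

lemma smul_map_ofReal (t : ℝ) (J : Matrix (Fin d) (Fin d) ℝ) :
    ((t • J).map Complex.ofReal) = (t : ℂ) • (J.map Complex.ofReal) := by
  ext i j
  simp [Matrix.map_apply, Matrix.smul_apply, Complex.ofReal_mul]

theorem expMap_injective_iff' (J : Matrix (Fin d) (Fin d) ℝ) (hJ : J ≠ 0) :
    Function.Injective (fun p : (Fin d → ℝ) × ℝ =>
        exp (Matrix.fromBlocks (0 : Matrix (Fin 1) (Fin 1) ℝ) 0
          (Matrix.of fun i (_ : Fin 1) => p.1 i) (p.2 • J))) ↔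
      ¬∃ z ∈ spectrum ℂ (J.map Complex.ofReal), z ≠ 0 ∧ z.re = 0 := by
  constructor
  · -- injective → no nonzero purely imaginary eigenvalue
    intro hinj
    rintro ⟨z, hz, hz0, hzre⟩
    have hθ : z.im ≠ 0 := by
      intro h
      exact hz0 (Complex.ext hzre h)
    have hθc : (z.im : ℂ) ≠ 0 := by exact_mod_cast hθ
    obtain ⟨u, hu0, hu⟩ := (mem_spectrum_iff_eigen _ z).mp hz
    set t : ℝ := 2 * Real.pi / z.im with htdef
    have hz' : z = (z.im : ℂ) * Complex.I := by
      rw [← Complex.re_add_im z, hzre]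
      simp
    have htz : (t : ℂ) * z = 2 * Real.pi * Complex.I := by
      rw [hz', htdef]
      push_cast
      field_simp
    have hAu : ((t • J).map Complex.ofReal) *ᵥ u = ((2 * Real.pi : ℝ) * Complex.I) • u := by
      rw [smul_map_ofReal, Matrix.smul_mulVec, hu, smul_smul, htz]
      norm_num
    have hS2pi : Sgen ℂ ((2 * Real.pi : ℝ) * Complex.I) = 0 := by
      refine (Sgen_scalar_eq_zero_iff _).mpr ⟨?_, ?_⟩
      · push_cast
        exact Complex.two_pi_I_ne_zero
      · push_cast
        exact Complex.exp_two_pi_mul_I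
    have hS : Sgen ℂ ((t • J).map Complex.ofReal) *ᵥ u = 0 := by
      rw [Sgen_mulVec_eigen _ hAu, hS2pi, zero_smul]
    have hdetC : (Sgen ℂ ((t • J).map Complex.ofReal)).det = 0 :=
      Matrix.exists_mulVec_eq_zero_iff.mp ⟨u, hu0, hS⟩
    have hdetR : (Sgen ℝ (t • J)).det = 0 := by
      rw [det_Sgen_complex] at hdetC
      exact_mod_cast hdetC
    obtain ⟨v, hv0, hv⟩ := Matrix.exists_mulVec_eq_zero_iff.mpr hdetR
    have himg : (fun p : (Fin d → ℝ) × ℝ =>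
        exp (Matrix.fromBlocks (0 : Matrix (Fin 1) (Fin 1) ℝ) 0
          (Matrix.of fun i (_ : Fin 1) => p.1 i) (p.2 • J))) (v, t)
        = (fun p : (Fin d → ℝ) × ℝ =>
        exp (Matrix.fromBlocks (0 : Matrix (Fin 1) (Fin 1) ℝ) 0
          (Matrix.of fun i (_ : Fin 1) => p.1 i) (p.2 • J))) (0, t) := by
      dsimp only
      rw [exp_fromBlocks, exp_fromBlocks, mul_col, mul_col, hv, Matrix.mulVec_zero]
    have := hinj himg
    exact hv0 (congrArg Prod.fst this)
  · -- no nonzero purely imaginary eigenvalue → injective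
    intro hspec
    have hdetR : ∀ r : ℝ, (Sgen ℝ (r • J)).det ≠ 0 := by
      intro r hzero
      refine det_Sgen_ne_zero J hspec r ?_
      rw [det_Sgen_complex, hzero]
      norm_num
    rintro ⟨v, t⟩ ⟨w, s⟩ h
    dsimp only at h
    rw [exp_fromBlocks, exp_fromBlocks] at h
    have h21 := congrArg Matrix.toBlocks₂₁ h
    have h22 := congrArg Matrix.toBlocks₂₂ h
    rw [Matrix.toBlocks_fromBlocks₂₁, Matrix.toBlocks_fromBlocks₂₁] at h21
    rw [Matrix.toBlocks_fromBlocks₂₂, Matrix.toBlocks_fromBlocks₂₂] at h22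
    have hts : t = s := by
      by_contra hne
      have hcomm : Commute ((t - s) • J) (s • J) := ((Commute.refl J).smul_left _).smul_right _
      have hadd : (t - s) • J + s • J = t • J := by
        rw [← add_smul]
        ring_nf
      have he1 : exp ((t - s) • J) * exp (s • J) = exp (s • J) := by
        rw [← Matrix.exp_add_of_commute _ _ hcomm, hadd, h22]
      have hunit := Matrix.isUnit_exp (s • J)
      have hone : exp ((t - s) • J) = 1 := by
        refine hunit.mul_right_cancel ?_
        rw [he1, one_mul]
      have h2 := exp_eq_one_add_mul_Sgen_matrix ℝ ((t - s) • J)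
      rw [hone] at h2
      have h3 : ((t - s) • J) * Sgen ℝ ((t - s) • J) = 0 := left_eq_add.mp h2
      have hU : IsUnit (Sgen ℝ ((t - s) • J)).det := isUnit_iff_ne_zero.mpr (hdetR (t - s))
      have h4 : ((t - s) • J) = 0 := by
        have h5 := congrArg (fun X => X * (Sgen ℝ ((t - s) • J))⁻¹) h3
        rwa [Matrix.mul_assoc, Matrix.mul_nonsing_inv _ hU, Matrix.mul_one,
          Matrix.zero_mul] at h5
      rcases smul_eq_zero.mp h4 with h | h
      · exact hne (by linarith [sub_eq_zero.mp h])
      · exact hJ h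
    subst hts
    have hvw : v = w := by
      have h21' : Sgen ℝ (t • J) *ᵥ v = Sgen ℝ (t • J) *ᵥ w := by
        rw [mul_col, mul_col] at h21
        funext i
        exact congrFun (congrFun h21 i) 0
      by_contra hne
      have hker : Sgen ℝ (t • J) *ᵥ (v - w) = 0 := by
        rw [Matrix.mulVec_sub _ v w, h21', sub_self]
      exact hdetR t (Matrix.exists_mulVec_eq_zero_iff.mp ⟨v - w, sub_ne_zero.mpr hne, hker⟩)
    rw [hvw]

end Main


/-- The exponential map `(v,t) ↦ exp [[0,0],[v,tJ]]` of the simply connected almost Abelian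
group with Lie algebra `ℝ^d ⋊_J ℝ` is injective iff the complexification of `J` has no
nonzero purely imaginary eigenvalue. -/
theorem expMap_injective_iff (d : ℕ) (J : Matrix (Fin d) (Fin d) ℝ) (hJ : J ≠ 0) :
    Function.Injective (fun p : (Fin d → ℝ) × ℝ =>
        exp (Matrix.fromBlocks (0 : Matrix (Fin 1) (Fin 1) ℝ) 0
          (Matrix.of fun i (_ : Fin 1) => p.1 i) (p.2 • J))) ↔
      ¬∃ z ∈ spectrum ℂ (J.map Complex.ofReal), z ≠ 0 ∧ z.re = 0 :=
  expMap_injective_iff' J hJ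
end MatrixLemmas
end
end

section
/- Let J be a real d×d matrix whose complexification has a nonzero purely imaginary eigenvalue. Let L(J) be the real vector space of (d+1)×(d+1) real matrices of the form fromBlocks [[0,0],[v, t·J]] with v ∈ ℝ^d, t ∈ ℝ, and let E be the real vector space of 3×3 real matrices of the form fromBlocks [[0,0],[w, s·R]] with w ∈ ℝ², s ∈ ℝ, where R = [[0,−1],[1,0]]. Then there exists a 3-dimensional real subspace L ⊆ L(J) that is closed under the matrix commutator ⁅A,B⁆ = A·B − B·A, together with a real-linear bijection φ : E → L satisfying φ(⁅X,Y⁆) = ⁅φ(X),φ(Y)⁆ for all X,Y ∈ E. -/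
open scoped Matrix
open NormedSpace

noncomputable section

/-- The rotation generator `R = [[0,-1],[1,0]]`. -/
def rotGen : Matrix (Fin 2) (Fin 2) ℝ := !![0, -1; 1, 0]

/-- The Lie algebra of the Euclidean motion group `E(2)`: the 3×3 real matrices of the form
`fromBlocks [[0,0],[w, s·R]]` with `w ∈ ℝ²`, `s ∈ ℝ`. -/
def eucAlg : Set (Matrix (Fin 1 ⊕ Fin 2) (Fin 1 ⊕ Fin 2) ℝ) :=
  {M | ∃ (w : Fin 2 → ℝ) (s : ℝ),
    M = Matrix.fromBlocks 0 0 (Matrix.of fun i (_ : Fin 1) => w i) (s • rotGen)}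

/-- The almost Abelian Lie algebra `ℝ^d ⋊_J ℝ` in its faithful matrix representation:
the `(d+1)×(d+1)` real matrices `fromBlocks [[0,0],[v, t·J]]`. -/
def LJset (d : ℕ) (J : Matrix (Fin d) (Fin d) ℝ) :
    Set (Matrix (Fin 1 ⊕ Fin d) (Fin 1 ⊕ Fin d) ℝ) :=
  {M | ∃ (v : Fin d → ℝ) (t : ℝ),
    M = Matrix.fromBlocks 0 0 (Matrix.of fun i (_ : Fin 1) => v i) (t • J)}

/-- block matrix `[[0,0],[v,A]]` -/
def bM {d : ℕ} (v : Fin d → ℝ) (A : Matrix (Fin d) (Fin d) ℝ) :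
    Matrix (Fin 1 ⊕ Fin d) (Fin 1 ⊕ Fin d) ℝ :=
  Matrix.fromBlocks 0 0 (Matrix.of fun i (_ : Fin 1) => v i) A

lemma bM_add {d : ℕ} (v w : Fin d → ℝ) (A B : Matrix (Fin d) (Fin d) ℝ) :
    bM (v + w) (A + B) = bM v A + bM w B := by
  ext i j
  cases i <;> cases j <;> simp [bM]

lemma bM_smul {d : ℕ} (c : ℝ) (v : Fin d → ℝ) (A : Matrix (Fin d) (Fin d) ℝ) :
    bM (c • v) (c • A) = c • bM v A := by
  ext i j
  cases i <;> cases j <;> simp [bM]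

lemma bM_sub {d : ℕ} (v w : Fin d → ℝ) (A B : Matrix (Fin d) (Fin d) ℝ) :
    bM (v - w) (A - B) = bM v A - bM w B := by
  ext i j
  cases i <;> cases j <;> simp [bM]

lemma mul_colM {d : ℕ} (A : Matrix (Fin d) (Fin d) ℝ) (w : Fin d → ℝ) :
    A * (Matrix.of fun i (_ : Fin 1) => w i) = Matrix.of fun i (_ : Fin 1) => (A *ᵥ w) i := by
  ext i j
  simp [Matrix.mul_apply, Matrix.mulVec, dotProduct]

lemma bM_mul {d : ℕ} (v w : Fin d → ℝ) (A B : Matrix (Fin d) (Fin d) ℝ) :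
    bM v A * bM w B = bM (A *ᵥ w) (A * B) := by
  unfold bM
  rw [Matrix.fromBlocks_multiply, mul_colM]
  simp

lemma bM_inj {d : ℕ} {v w : Fin d → ℝ} {A B : Matrix (Fin d) (Fin d) ℝ}
    (h : bM v A = bM w B) : v = w ∧ A = B := by
  constructor
  · funext i
    have := congrFun (congrFun h (Sum.inr i)) (Sum.inl 0)
    simpa [bM] using this
  · ext i j
    have := congrFun (congrFun h (Sum.inr i)) (Sum.inr j)
    simpa [bM] using this

example : True := trivial

lemma exists_uw {d : ℕ} (J : Matrix (Fin d) (Fin d) ℝ)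
    (h : ∃ z ∈ spectrum ℂ (J.map Complex.ofReal), z ≠ 0 ∧ z.re = 0) :
    ∃ (b : ℝ) (u w : Fin d → ℝ), b ≠ 0 ∧ J *ᵥ u = (-b) • w ∧ J *ᵥ w = b • u ∧
      ¬(u = 0 ∧ w = 0) := by
  obtain ⟨z, hz, hz0, hzre⟩ := h
  rw [spectrum.mem_iff] at hz
  have hdet : (algebraMap ℂ (Matrix (Fin d) (Fin d) ℂ) z - J.map Complex.ofReal).det = 0 := by
    by_contra hd
    exact hz ((Matrix.isUnit_iff_isUnit_det _).2 (isUnit_iff_ne_zero.2 hd))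
  obtain ⟨x, hx0, hxv⟩ := (Matrix.exists_mulVec_eq_zero_iff).2 hdet
  have hAx : (J.map Complex.ofReal) *ᵥ x = z • x := by
    rw [Matrix.sub_mulVec] at hxv
    have h1 : (algebraMap ℂ (Matrix (Fin d) (Fin d) ℂ) z) *ᵥ x = z • x := by
      rw [Algebra.algebraMap_eq_smul_one, Matrix.smul_mulVec, Matrix.one_mulVec]
    have := sub_eq_zero.mp hxv
    rw [h1] at this
    exact this.symm
  have hb : z.im ≠ 0 := by
    intro h0
    exact hz0 (Complex.ext hzre h0)
  refine ⟨z.im, fun i => (x i).re, fun i => (x i).im, hb, ?_, ?_, ?_⟩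
  · funext i
    have hi := congrArg Complex.re (congrFun hAx i)
    simpa [Matrix.mulVec, dotProduct, Complex.re_sum, Complex.mul_re, hzre,
      Matrix.map_apply] using hi
  · funext i
    have hi := congrArg Complex.im (congrFun hAx i)
    simpa [Matrix.mulVec, dotProduct, Complex.im_sum, Complex.mul_im, hzre,
      Matrix.map_apply] using hi
  · rintro ⟨hu, hw⟩
    apply hx0
    funext i
    have h1 : (x i).re = 0 := congrFun hu i
    have h2 : (x i).im = 0 := congrFun hw i
    simp [Complex.ext_iff, h1, h2]

lemma uw_indep {d : ℕ} {J : Matrix (Fin d) (Fin d) ℝ} {b : ℝ} {u w : Fin d → ℝ}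
    (hb : b ≠ 0) (hu : J *ᵥ u = (-b) • w) (hw : J *ᵥ w = b • u)
    (hne : ¬(u = 0 ∧ w = 0)) :
    ∀ c e : ℝ, c • u + e • w = 0 → c = 0 ∧ e = 0 := by
  intro c e hce
  have h2 : c • (J *ᵥ u) + e • (J *ᵥ w) = 0 := by
    have := congrArg (fun y => J *ᵥ y) hce
    simpa [Matrix.mulVec_add, Matrix.mulVec_smul] using this
  rw [hu, hw] at h2
  have h3 : b • (e • u - c • w) = 0 := by
    rw [← h2]; module
  have h4 : e • u - c • w = 0 := by
    rcases smul_eq_zero.mp h3 with h | h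
    · exact absurd h hb
    · exact h
  have hu0 : (c ^ 2 + e ^ 2) • u = 0 := by
    have : (c ^ 2 + e ^ 2) • u = c • (c • u + e • w) + e • (e • u - c • w) := by module
    rw [this, hce, h4]; simp
  have hw0 : (c ^ 2 + e ^ 2) • w = 0 := by
    have : (c ^ 2 + e ^ 2) • w = e • (c • u + e • w) - c • (e • u - c • w) := by module
    rw [this, hce, h4]; simp
  by_cases hcs : c ^ 2 + e ^ 2 = 0
  · constructor <;> nlinarith [sq_nonneg c, sq_nonneg e]
  · exfalso
    apply hne
    constructor
    · rcases smul_eq_zero.mp hu0 with h | h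
      · exact absurd h hcs
      · exact h
    · rcases smul_eq_zero.mp hw0 with h | h
      · exact absurd h hcs
      · exact h

lemma J_ne_zero {d : ℕ} {J : Matrix (Fin d) (Fin d) ℝ} {b : ℝ} {u w : Fin d → ℝ}
    (hb : b ≠ 0) (hu : J *ᵥ u = (-b) • w) (hw : J *ᵥ w = b • u)
    (hne : ¬(u = 0 ∧ w = 0)) : J ≠ 0 := by
  intro h0
  rw [h0, Matrix.zero_mulVec] at hu hw
  apply hne
  constructor
  · rcases smul_eq_zero.mp hw.symm with h | h
    · exact absurd h hb
    · exact h
  · rcases smul_eq_zero.mp hu.symm with h | h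
    · exact absurd (neg_eq_zero.mp h) hb
    · exact h

lemma bM_zero {d : ℕ} : bM (0 : Fin d → ℝ) (0 : Matrix (Fin d) (Fin d) ℝ) = 0 := by
  ext i j
  cases i <;> cases j <;> simp [bM]

lemma bM_congr {d : ℕ} {v w : Fin d → ℝ} {A B : Matrix (Fin d) (Fin d) ℝ}
    (h1 : v = w) (h2 : A = B) : bM v A = bM w B := by rw [h1, h2]

lemma bM_apply21 {d : ℕ} (v : Fin d → ℝ) (A : Matrix (Fin d) (Fin d) ℝ) (i : Fin d) (j : Fin 1) :
    bM v A (Sum.inr i) (Sum.inl j) = v i := by simp [bM]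

lemma bM_apply22 {d : ℕ} (v : Fin d → ℝ) (A : Matrix (Fin d) (Fin d) ℝ) (i j : Fin d) :
    bM v A (Sum.inr i) (Sum.inr j) = A i j := by simp [bM]

def phiAux {d : ℕ} (J : Matrix (Fin d) (Fin d) ℝ) (b : ℝ) (u w : Fin d → ℝ) :
    Matrix (Fin 1 ⊕ Fin 2) (Fin 1 ⊕ Fin 2) ℝ →ₗ[ℝ] Matrix (Fin 1 ⊕ Fin d) (Fin 1 ⊕ Fin d) ℝ where
  toFun M := bM (M (Sum.inr 0) (Sum.inl 0) • u - M (Sum.inr 1) (Sum.inl 0) • w)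
    ((M (Sum.inr 1) (Sum.inr 0) * b⁻¹) • J)
  map_add' M N := by
    rw [← bM_add]
    apply bM_congr
    · simp only [Matrix.add_apply]
      module
    · simp only [Matrix.add_apply]
      rw [add_mul, add_smul]
  map_smul' r M := by
    rw [← bM_smul]
    apply bM_congr
    · simp only [Matrix.smul_apply, smul_eq_mul, RingHom.id_apply]
      module
    · simp only [Matrix.smul_apply, smul_eq_mul, RingHom.id_apply]
      rw [mul_assoc, smul_smul]

lemma rotGen_mulVec (c : Fin 2 → ℝ) : rotGen *ᵥ c = ![-(c 1), c 0] := by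
  funext i
  fin_cases i <;>
    simp [rotGen, Matrix.mulVec, dotProduct, Fin.sum_univ_two]

lemma phiAux_apply {d : ℕ} (J : Matrix (Fin d) (Fin d) ℝ) (b : ℝ) (u w : Fin d → ℝ)
    (a : Fin 2 → ℝ) (s : ℝ) :
    phiAux J b u w (bM a (s • rotGen)) =
      bM (a 0 • u - a 1 • w) ((s * b⁻¹) • J) := by
  show bM _ _ = _
  apply bM_congr
  · rw [bM_apply21, bM_apply21]
  · rw [bM_apply22]
    simp [rotGen]

/-- If the complexification of `J` has a nonzero purely imaginary eigenvalue then the almost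
Abelian algebra `L(J)` contains a 3-dimensional subalgebra isomorphic (as a Lie algebra, via a
bracket-preserving real-linear bijection) to the Lie algebra of `E(2)`. -/
theorem exists_e2_subalgebra (d : ℕ) (J : Matrix (Fin d) (Fin d) ℝ)
    (h : ∃ z ∈ spectrum ℂ (J.map Complex.ofReal), z ≠ 0 ∧ z.re = 0) :
    ∃ L : Submodule ℝ (Matrix (Fin 1 ⊕ Fin d) (Fin 1 ⊕ Fin d) ℝ),
      (L : Set (Matrix (Fin 1 ⊕ Fin d) (Fin 1 ⊕ Fin d) ℝ)) ⊆ LJset d J ∧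
      Module.finrank ℝ L = 3 ∧
      (∀ A ∈ L, ∀ B ∈ L, A * B - B * A ∈ L) ∧
      ∃ φ : Matrix (Fin 1 ⊕ Fin 2) (Fin 1 ⊕ Fin 2) ℝ →ₗ[ℝ]
          Matrix (Fin 1 ⊕ Fin d) (Fin 1 ⊕ Fin d) ℝ,
        Set.BijOn φ eucAlg (L : Set (Matrix (Fin 1 ⊕ Fin d) (Fin 1 ⊕ Fin d) ℝ)) ∧
        ∀ X ∈ eucAlg, ∀ Y ∈ eucAlg, φ (X * Y - Y * X) = φ X * φ Y - φ Y * φ X := by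
  obtain ⟨b, u, w, hb, hu, hw, hne⟩ := exists_uw J h
  have hind := uw_indep hb hu hw hne
  have hJ := J_ne_zero hb hu hw hne
  set e : Fin 3 → Matrix (Fin 1 ⊕ Fin d) (Fin 1 ⊕ Fin d) ℝ :=
    ![bM u 0, bM w 0, bM 0 (b⁻¹ • J)] with he
  have he0 : e 0 = bM u 0 := rfl
  have he1 : e 1 = bM w 0 := rfl
  have he2 : e 2 = bM 0 (b⁻¹ • J) := rfl
  have hsum : ∀ c : Fin 3 → ℝ,
      (∑ i, c i • e i) = bM (c 0 • u + c 1 • w) ((c 2 * b⁻¹) • J) := by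
    intro c
    rw [Fin.sum_univ_three, he0, he1, he2, ← bM_smul, ← bM_smul, ← bM_smul,
      ← bM_add, ← bM_add]
    apply bM_congr
    · simp
    · simp [smul_smul]
  set L : Submodule ℝ (Matrix (Fin 1 ⊕ Fin d) (Fin 1 ⊕ Fin d) ℝ) :=
    Submodule.span ℝ (Set.range e) with hL
  have hmem : ∀ M, M ∈ L ↔ ∃ α β γ : ℝ, M = bM (α • u + β • w) (γ • J) := by
    intro M
    rw [hL, Submodule.mem_span_range_iff_exists_fun]
    constructor
    · rintro ⟨c, hc⟩
      exact ⟨c 0, c 1, c 2 * b⁻¹, by rw [← hc, hsum]⟩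
    · rintro ⟨α, β, γ, rfl⟩
      refine ⟨![α, β, γ * b], ?_⟩
      rw [hsum]
      apply bM_congr
      · simp
      · simp only [Matrix.cons_val_two, Matrix.tail_cons, Matrix.head_cons]
        rw [mul_assoc, mul_inv_cancel₀ hb, mul_one]
  have li : LinearIndependent ℝ e := by
    rw [Fintype.linearIndependent_iff]
    intro c hc
    rw [hsum] at hc
    obtain ⟨h1, h2⟩ := bM_inj (hc.trans bM_zero.symm)
    obtain ⟨hc0, hc1⟩ := hind (c 0) (c 1) h1
    have hc2 : c 2 = 0 := by
      rcases smul_eq_zero.mp h2 with h | h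
      · rcases mul_eq_zero.mp h with h' | h'
        · exact h'
        · exact absurd h' (inv_ne_zero hb)
      · exact absurd h hJ
    intro i
    fin_cases i <;> assumption
  refine ⟨L, ?_, ?_, ?_, ?_⟩
  · intro M hM
    obtain ⟨α, β, γ, rfl⟩ := (hmem M).mp hM
    exact ⟨α • u + β • w, γ, rfl⟩
  · rw [hL]
    rw [finrank_span_eq_card li]
    simp
  · intro A hA B hB
    obtain ⟨α, β, γ, rfl⟩ := (hmem A).mp hA
    obtain ⟨α', β', γ', rfl⟩ := (hmem B).mp hB
    rw [bM_mul, bM_mul, ← bM_sub]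
    rw [hmem]
    refine ⟨γ * (β' * b) - γ' * (β * b), γ' * (α * b) - γ * (α' * b), 0, ?_⟩
    apply bM_congr
    · rw [Matrix.smul_mulVec, Matrix.smul_mulVec, Matrix.mulVec_add,
        Matrix.mulVec_add, Matrix.mulVec_smul, Matrix.mulVec_smul, Matrix.mulVec_smul,
        Matrix.mulVec_smul, hu, hw]
      module
    · rw [Matrix.smul_mul, Matrix.mul_smul, Matrix.smul_mul, Matrix.mul_smul,
        smul_smul, smul_smul, mul_comm γ' γ, sub_self, zero_smul]
  · refine ⟨phiAux J b u w, ⟨?_, ?_, ?_⟩, ?_⟩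
    · -- MapsTo
      rintro X ⟨a, s, rfl⟩
      have hX : (Matrix.fromBlocks 0 0 (Matrix.of fun i (_ : Fin 1) => a i) (s • rotGen)) =
          bM a (s • rotGen) := rfl
      rw [hX, phiAux_apply]
      rw [SetLike.mem_coe, hmem]
      refine ⟨a 0, -(a 1), s * b⁻¹, ?_⟩
      apply bM_congr
      · module
      · rfl
    · -- InjOn
      rintro X ⟨a, s, rfl⟩ Y ⟨c, t, rfl⟩ hXY
      have hX : (Matrix.fromBlocks 0 0 (Matrix.of fun i (_ : Fin 1) => a i) (s • rotGen)) =
          bM a (s • rotGen) := rfl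
      have hY : (Matrix.fromBlocks 0 0 (Matrix.of fun i (_ : Fin 1) => c i) (t • rotGen)) =
          bM c (t • rotGen) := rfl
      rw [hX, hY, phiAux_apply, phiAux_apply] at hXY
      obtain ⟨h1, h2⟩ := bM_inj hXY
      have h3 : (a 0 - c 0) • u + (c 1 - a 1) • w = 0 := by
        have heq : (a 0 - c 0) • u + (c 1 - a 1) • w =
            (a 0 • u - a 1 • w) - (c 0 • u - c 1 • w) := by module
        rw [heq, h1, sub_self]
      obtain ⟨g1, g2⟩ := hind _ _ h3
      have hac : a = c := by
        funext i
        fin_cases i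
        · exact sub_eq_zero.mp g1
        · exact (sub_eq_zero.mp g2).symm
      have hst : s = t := by
        have h4 : ((s - t) * b⁻¹) • J = 0 := by
          rw [sub_mul, sub_smul, h2, sub_self]
        rcases smul_eq_zero.mp h4 with h' | h'
        · rcases mul_eq_zero.mp h' with h'' | h''
          · exact sub_eq_zero.mp h''
          · exact absurd h'' (inv_ne_zero hb)
        · exact absurd h' hJ
      rw [hac, hst]
    · -- SurjOn
      intro M hM
      obtain ⟨α, β, γ, rfl⟩ := (hmem M).mp hM
      refine ⟨bM ![α, -β] ((γ * b) • rotGen), ⟨![α, -β], γ * b, rfl⟩, ?_⟩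
      rw [phiAux_apply]
      apply bM_congr
      · simp only [Matrix.cons_val_zero, Matrix.cons_val_one, Matrix.head_cons]
        module
      · rw [mul_assoc, mul_inv_cancel₀ hb, mul_one]
    · -- bracket
      rintro X ⟨a, s, rfl⟩ Y ⟨c, t, rfl⟩
      have hX : (Matrix.fromBlocks 0 0 (Matrix.of fun i (_ : Fin 1) => a i) (s • rotGen)) =
          bM a (s • rotGen) := rfl
      have hY : (Matrix.fromBlocks 0 0 (Matrix.of fun i (_ : Fin 1) => c i) (t • rotGen)) =
          bM c (t • rotGen) := rfl
      rw [hX, hY, bM_mul, bM_mul, ← bM_sub]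
      have hm : (s • rotGen) * (t • rotGen) - (t • rotGen) * (s • rotGen) =
          (0 : ℝ) • rotGen := by
        rw [Matrix.smul_mul, Matrix.mul_smul, Matrix.smul_mul, Matrix.mul_smul,
          smul_smul, smul_smul, mul_comm t s, sub_self, zero_smul]
      rw [hm, phiAux_apply, phiAux_apply, phiAux_apply, bM_mul, bM_mul, ← bM_sub]
      apply bM_congr
      · rw [Matrix.smul_mulVec, Matrix.smul_mulVec, Matrix.smul_mulVec,
          Matrix.smul_mulVec, Matrix.mulVec_sub, Matrix.mulVec_sub,
          Matrix.mulVec_smul, Matrix.mulVec_smul, Matrix.mulVec_smul, Matrix.mulVec_smul,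
          hu, hw, rotGen_mulVec, rotGen_mulVec]
        simp only [Pi.sub_apply, Pi.smul_apply, smul_eq_mul, Matrix.cons_val_zero,
          Matrix.cons_val_one, Matrix.head_cons]
        match_scalars <;> field_simp <;> ring
      · rw [Matrix.smul_mul, Matrix.mul_smul, Matrix.smul_mul, Matrix.mul_smul,
          smul_smul, smul_smul, mul_comm (t * b⁻¹) (s * b⁻¹), sub_self, zero_mul, zero_smul]
end
end

section
/- Let J be a nonzero real d×d matrix. There exists t ≠ 0 with exp(t·J) = 1 (the identity matrix) if and only if the complexification of J is diagonalizable (i.e. there exist an invertible complex matrix P and a diagonal complex matrix D with Jℂ = P·D·P⁻¹) and there exists ω > 0 such that every eigenvalue of the complexification of J lies in iωℤ = {iωm : m ∈ ℤ}. -/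
open scoped Matrix
open NormedSpace
open scoped Nat

attribute [local instance] Matrix.linftyOpNormedAddCommGroup Matrix.linftyOpNormedRing
  Matrix.linftyOpNormedAlgebra

namespace ExpSmulAux

variable {d : ℕ}

lemma exp_map_ofReal (M : Matrix (Fin d) (Fin d) ℝ) :
    (exp M).map Complex.ofReal = exp (M.map Complex.ofReal) := by
  have h1 : (Complex.ofRealHom.mapMatrix : Matrix (Fin d) (Fin d) ℝ →+* _) (exp M)
      = exp (Complex.ofRealHom.mapMatrix M) :=
    map_exp _ (Continuous.matrix_map continuous_id Complex.continuous_ofReal) M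
  exact h1

lemma map_ofReal_smul (t : ℝ) (J : Matrix (Fin d) (Fin d) ℝ) :
    (t • J).map Complex.ofReal = (t : ℂ) • J.map Complex.ofReal := by
  ext i j
  simp [Matrix.map_apply]

lemma map_ofReal_inj {M N : Matrix (Fin d) (Fin d) ℝ}
    (h : M.map Complex.ofReal = N.map Complex.ofReal) : M = N := by
  ext i j
  have := congrArg (fun X => X i j) h
  simpa [Matrix.map_apply, Complex.ofReal_inj] using this

lemma exp_mulVec_eigen (M : Matrix (Fin d) (Fin d) ℂ) (v : Fin d → ℂ) (μ : ℂ)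
    (hv : M *ᵥ v = μ • v) : exp M *ᵥ v = Complex.exp μ • v := by
  have hpow : ∀ n : ℕ, (M ^ n) *ᵥ v = μ ^ n • v := by
    intro n
    induction n with
    | zero => simp
    | succ n ih =>
      rw [pow_succ', pow_succ', ← Matrix.mulVec_mulVec, ih, Matrix.mulVec_smul, hv,
        smul_smul, mul_comm]
  let L0 : Matrix (Fin d) (Fin d) ℂ →ₗ[ℂ] (Fin d → ℂ) :=
    { toFun := fun N => N *ᵥ v
      map_add' := fun N N' => Matrix.add_mulVec N N' v
      map_smul' := fun c N => Matrix.smul_mulVec c N v }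
  let L := LinearMap.toContinuousLinearMap L0
  have hL : ∀ N, L N = N *ᵥ v := fun _ => rfl
  have hsum : Summable fun n : ℕ => (n !⁻¹ : ℂ) • M ^ n := expSeries_summable' M
  calc exp M *ᵥ v = L (∑' n : ℕ, (n !⁻¹ : ℂ) • M ^ n) := by rw [exp_eq_tsum ℂ]; rfl
    _ = ∑' n : ℕ, (n !⁻¹ : ℂ) • ((M ^ n) *ᵥ v) := by
        rw [L.map_tsum hsum]
        exact tsum_congr fun n => by rw [hL, Matrix.smul_mulVec]
    _ = ∑' n : ℕ, ((n !⁻¹ : ℂ) * μ ^ n) • v := by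
        exact tsum_congr fun n => by rw [hpow, smul_smul]
    _ = (∑' n : ℕ, (n !⁻¹ : ℂ) * μ ^ n) • v := by
        refine Summable.tsum_smul_const ?_ v
        simpa using expSeries_summable' (𝕂 := ℂ) μ
    _ = Complex.exp μ • v := by
        congr 1
        rw [Complex.exp_eq_exp_ℂ, exp_eq_tsum ℂ]
        exact tsum_congr fun n => by rw [smul_eq_mul]

lemma exp_smul_one_add (μ : ℂ) (B : Matrix (Fin d) (Fin d) ℂ) :
    exp (μ • (1 : Matrix (Fin d) (Fin d) ℂ) + B) = Complex.exp μ • exp B := by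
  have hc : Commute (μ • (1 : Matrix (Fin d) (Fin d) ℂ)) B := (Commute.one_left B).smul_left μ
  rw [Matrix.exp_add_of_commute _ _ hc]
  have h1 : μ • (1 : Matrix (Fin d) (Fin d) ℂ) = algebraMap ℂ _ μ :=
    (Algebra.algebraMap_eq_smul_one μ).symm
  erw [h1, ← NormedSpace.algebraMap_exp_comm (𝕂 := ℂ) (𝔸 := Matrix (Fin d) (Fin d) ℂ) μ,
    ← Complex.exp_eq_exp_ℂ,
    Algebra.algebraMap_eq_smul_one, Matrix.smul_mul, Matrix.one_mul]

lemma eig_of_genEig {A : Matrix (Fin d) (Fin d) ℂ} (hA : exp A = 1)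
    (μ : ℂ) (v : Fin d → ℂ) (k : ℕ)
    (hv : ((A - μ • 1) ^ k) *ᵥ v = 0) : A *ᵥ v = μ • v := by
  set B := A - μ • (1 : Matrix (Fin d) (Fin d) ℂ) with hB
  set w : ℕ → Fin d → ℂ := fun n => (B ^ n) *ᵥ v with hwdef
  set c : ℂ := Complex.exp (-μ) with hcdef
  have hw0 : ∀ n, k ≤ n → w n = 0 := by
    intro n hn
    have : B ^ n = B ^ (n - k) * B ^ k := by rw [← pow_add]; congr 1; omega
    simp only [hwdef, this, ← Matrix.mulVec_mulVec, hv, Matrix.mulVec_zero]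
  have hexpB : exp B = c • 1 := by
    have hsplit : A = μ • 1 + B := by rw [hB]; abel
    rw [hsplit, exp_smul_one_add] at hA
    have := congrArg (fun M => c • M) hA
    simp only [smul_smul, hcdef, ← Complex.exp_add, neg_add_cancel, Complex.exp_zero,
      one_smul] at this
    exact this
  have heq : ∑ n ∈ Finset.range k, (n !⁻¹ : ℂ) • w n = c • v := by
    let L0 : Matrix (Fin d) (Fin d) ℂ →ₗ[ℂ] (Fin d → ℂ) :=
      { toFun := fun N => N *ᵥ v
        map_add' := fun N N' => Matrix.add_mulVec N N' v
        map_smul' := fun a N => Matrix.smul_mulVec a N v }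
    let L := LinearMap.toContinuousLinearMap L0
    have hL : ∀ N, L N = N *ᵥ v := fun _ => rfl
    have hsum : Summable fun n : ℕ => (n !⁻¹ : ℂ) • B ^ n := expSeries_summable' B
    have h1 : exp B *ᵥ v = ∑' n : ℕ, (n !⁻¹ : ℂ) • w n := by
      calc exp B *ᵥ v = L (∑' n : ℕ, (n !⁻¹ : ℂ) • B ^ n) := by rw [exp_eq_tsum ℂ]; rfl
        _ = ∑' n : ℕ, (n !⁻¹ : ℂ) • w n := by
            rw [L.map_tsum hsum]
            exact tsum_congr fun n => by rw [hL, Matrix.smul_mulVec]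
    have h2 : ∑' n : ℕ, (n !⁻¹ : ℂ) • w n = ∑ n ∈ Finset.range k, (n !⁻¹ : ℂ) • w n := by
      refine tsum_eq_sum fun n hn => ?_
      rw [hw0 n (by simpa using hn), smul_zero]
    rw [← h2, ← h1, hexpB, Matrix.smul_mulVec, Matrix.one_mulVec]
  have happ : ∀ m : ℕ, ∑ n ∈ Finset.range k, (n !⁻¹ : ℂ) • w (n + m) = c • w m := by
    intro m
    have h := congrArg (fun u => Matrix.mulVecLin (B ^ m) u) heq
    simp only [map_sum, map_smul, Matrix.mulVecLin_apply] at h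
    have hw : ∀ n, (B ^ m) *ᵥ w n = w (n + m) := by
      intro n
      simp only [hwdef, Matrix.mulVec_mulVec, ← pow_add]
      rw [add_comm]
    simpa only [hw, show (B ^ m) *ᵥ v = w m from rfl] using h
  have hkey : ∀ j : ℕ, (∀ l, j < l → w l = 0) → 1 ≤ j → w j = 0 := by
    intro j hl hj
    by_cases hjk : k ≤ j
    · exact hw0 j hjk
    push_neg at hjk
    by_cases hc1 : c = 1
    · have h := happ (j - 1)
      have hk2 : 2 ≤ k := by omega
      have hsub : ∑ n ∈ Finset.range k, (n !⁻¹ : ℂ) • w (n + (j - 1))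
          = ∑ n ∈ Finset.range 2, (n !⁻¹ : ℂ) • w (n + (j - 1)) := by
        refine (Finset.sum_subset (Finset.range_subset_range.2 hk2) fun x hx hx2 => ?_).symm
        have hx2' : 2 ≤ x := by simp at hx2; omega
        rw [hl (x + (j - 1)) (by omega), smul_zero]
      have h01 : ∑ n ∈ Finset.range 2, (n !⁻¹ : ℂ) • w (n + (j - 1))
          = w (j - 1) + w j := by
        rw [Finset.sum_range_succ, Finset.sum_range_one]
        have e0 : 0 + (j - 1) = j - 1 := by omega
        have e1 : 1 + (j - 1) = j := by omega
        rw [e0, e1]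
        norm_num [Nat.factorial]
      rw [hsub, h01, hc1, one_smul] at h
      exact add_eq_left.mp h
    · have h := happ j
      have hmem : (0 : ℕ) ∈ Finset.range k := Finset.mem_range.2 (by omega)
      have hsingle : ∑ n ∈ Finset.range k, (n !⁻¹ : ℂ) • w (n + j) = w j := by
        rw [Finset.sum_eq_single_of_mem 0 hmem fun x _ hx0 => by
          rw [hl (x + j) (by omega), smul_zero]]
        norm_num [Nat.factorial]
      rw [hsingle] at h
      have : (1 - c) • w j = 0 := by rw [sub_smul, one_smul, sub_eq_zero]; exact h
      rcases smul_eq_zero.mp this with h' | h'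
      · exact absurd (by linear_combination -h' : c = 1) hc1
      · exact h'
  have hall : ∀ N j, k ≤ j + N → 1 ≤ j → w j = 0 := by
    intro N
    induction N with
    | zero => intro j hjk _; exact hw0 j (by omega)
    | succ N ih =>
      intro j hjk hj
      by_cases h : k ≤ j + N
      · exact ih j h hj
      · exact hkey j (fun l hl' => ih l (by omega) (by omega)) hj
  have hw1 : w 1 = 0 := hall k 1 (by omega) le_rfl
  have : B *ᵥ v = 0 := by simpa [hwdef] using hw1
  rw [hB, Matrix.sub_mulVec, Matrix.smul_mulVec, Matrix.one_mulVec] at this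
  exact sub_eq_zero.mp this

lemma diag_of_eigen {A : Matrix (Fin d) (Fin d) ℂ}
    (h : ∀ μ v, v ∈ Module.End.maxGenEigenspace (Matrix.toLin' A : Module.End ℂ (Fin d → ℂ)) μ →
      A *ᵥ v = μ • v) :
    ∃ P D : Matrix (Fin d) (Fin d) ℂ, IsUnit P ∧ D.IsDiag ∧ A = P * D * P⁻¹ := by
  set f : Module.End ℂ (Fin d → ℂ) := Matrix.toLin' A with hf
  have hsup : ⨆ μ, f.eigenspace μ = ⊤ := by
    rw [eq_top_iff, ← Module.End.iSup_maxGenEigenspace_eq_top f]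
    refine iSup_mono fun μ v hv => ?_
    rw [Module.End.mem_eigenspace_iff]
    simpa [hf, Matrix.toLin'_apply] using h μ v hv
  have hint : DirectSum.IsInternal f.eigenspace :=
    (DirectSum.isInternal_submodule_iff_iSupIndep_and_iSup_eq_top _).2
      ⟨f.eigenspaces_iSupIndep, hsup⟩
  let bC := hint.collectedBasis fun μ => Module.Basis.ofVectorSpace ℂ (f.eigenspace μ)
  haveI : Fintype (Σ μ : ℂ, Module.Basis.ofVectorSpaceIndex ℂ (f.eigenspace μ)) :=
    FiniteDimensional.fintypeBasisIndex bC
  have hcard : Fintype.card (Σ μ : ℂ, Module.Basis.ofVectorSpaceIndex ℂ (f.eigenspace μ)) = d := by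
    rw [← Module.finrank_eq_card_basis bC, Module.finrank_fin_fun]
  let e := Fintype.equivFinOfCardEq hcard
  let b := bC.reindex e
  let μs : Fin d → ℂ := fun i => (e.symm i).1
  have hb : ∀ i, A *ᵥ b i = μs i • b i := by
    intro i
    have hmem : bC (e.symm i) ∈ f.eigenspace (e.symm i).1 :=
      hint.collectedBasis_mem (fun μ => Module.Basis.ofVectorSpace ℂ (f.eigenspace μ)) (e.symm i)
    rw [Module.End.mem_eigenspace_iff] at hmem
    have hbi : b i = bC (e.symm i) := bC.reindex_apply e i
    rw [hbi]
    simpa [hf, Matrix.toLin'_apply] using hmem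
  let P := (Pi.basisFun ℂ (Fin d)).toMatrix b
  haveI := (Pi.basisFun ℂ (Fin d)).invertibleToMatrix b
  have hP : IsUnit P := isUnit_of_invertible P
  refine ⟨P, Matrix.diagonal μs, hP, Matrix.isDiag_diagonal μs, ?_⟩
  have hPe : ∀ l j, P l j = b j l := fun l j => by
    simp [P, Module.Basis.toMatrix_apply, Pi.basisFun_repr]
  have hAP : A * P = P * Matrix.diagonal μs := by
    ext i j
    rw [Matrix.mul_apply, Matrix.mul_diagonal]
    calc ∑ l, A i l * P l j = (A *ᵥ b j) i := by
          simp [Matrix.mulVec, dotProduct, hPe]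
      _ = μs j * b j i := by rw [hb j]; simp
      _ = P i j * μs j := by rw [hPe, mul_comm]
  calc A = A * (P * P⁻¹) := by
        rw [Matrix.mul_nonsing_inv P ((Matrix.isUnit_iff_isUnit_det P).1 hP), mul_one]
    _ = A * P * P⁻¹ := by rw [mul_assoc]
    _ = P * Matrix.diagonal μs * P⁻¹ := by rw [hAP]

end ExpSmulAux

open ExpSmulAux

/-- `exp(tJ) = 1` for some `t ≠ 0` iff the complexification of `J` is diagonalizable and all
its eigenvalues lie in `iωℤ` for some `ω > 0`. -/
theorem exists_exp_smul_eq_one_iff (d : ℕ) (J : Matrix (Fin d) (Fin d) ℝ) (hJ : J ≠ 0) :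
    (∃ t : ℝ, t ≠ 0 ∧ exp (t • J) = 1) ↔
      ((∃ P D : Matrix (Fin d) (Fin d) ℂ, IsUnit P ∧ D.IsDiag ∧
          J.map Complex.ofReal = P * D * P⁻¹) ∧
        ∃ ω : ℝ, 0 < ω ∧ ∀ z ∈ spectrum ℂ (J.map Complex.ofReal),
          ∃ m : ℤ, z = Complex.I * ω * m) := by
  set Jc : Matrix (Fin d) (Fin d) ℂ := J.map Complex.ofReal with hJc
  constructor
  · rintro ⟨t, ht, hexp⟩
    have hAc : exp ((t : ℂ) • Jc) = 1 := by
      have h1 := exp_map_ofReal (t • J)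
      rw [hexp, map_ofReal_smul] at h1
      rw [hJc, ← h1]
      ext i j
      simp [Matrix.map_apply, Matrix.one_apply, apply_ite]
    set A : Matrix (Fin d) (Fin d) ℂ := (t : ℂ) • Jc with hA
    clear_value A
    -- every generalized eigenvector of A is an eigenvector
    have hgen : ∀ μ v,
        v ∈ Module.End.maxGenEigenspace (Matrix.toLin' A : Module.End ℂ (Fin d → ℂ)) μ →
        A *ᵥ v = μ • v := by
      intro μ v hv
      rw [Module.End.mem_maxGenEigenspace] at hv
      obtain ⟨k, hk⟩ := hv
      have hmat : ((A - μ • 1) ^ k) *ᵥ v = 0 := by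
        have hEq : (Matrix.toLinAlgEquiv' : Matrix (Fin d) (Fin d) ℂ ≃ₐ[ℂ] _) ((A - μ • 1) ^ k)
            = ((Matrix.toLin' A : Module.End ℂ (Fin d → ℂ)) - μ • 1) ^ k := by
          rw [map_pow, map_sub, map_smul, map_one]
          rfl
        have := congrArg (fun g => g v) hEq
        simp only [Matrix.toLinAlgEquiv'_apply] at this
        rw [this, hk]
      exact eig_of_genEig hAc μ v k hmat
    constructor
    · -- diagonalizability
      obtain ⟨P, D, hP, hD, hPD⟩ := diag_of_eigen hgen
      refine ⟨P, (t : ℂ)⁻¹ • D, hP, hD.smul _, ?_⟩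
      have htc : (t : ℂ) ≠ 0 := by exact_mod_cast ht
      have : Jc = (t : ℂ)⁻¹ • A := by rw [hA, smul_smul, inv_mul_cancel₀ htc, one_smul]
      rw [this, hPD, Matrix.mul_smul, Matrix.smul_mul]
    · -- eigenvalues in iωℤ
      refine ⟨2 * Real.pi / |t|, by positivity, fun z hz => ?_⟩
      -- find an eigenvector
      have hz' : Module.End.HasEigenvalue (Matrix.toLin' Jc : Module.End ℂ (Fin d → ℂ)) z := by
        rw [Module.End.hasEigenvalue_iff_mem_spectrum]
        rwa [show spectrum ℂ (Matrix.toLin' Jc : Module.End ℂ (Fin d → ℂ)) = spectrum ℂ Jc from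
          AlgEquiv.spectrum_eq (Matrix.toLinAlgEquiv' : Matrix (Fin d) (Fin d) ℂ ≃ₐ[ℂ] _) Jc]
      obtain ⟨v, hv, hv0⟩ := hz'.exists_hasEigenvector
      rw [Module.End.mem_eigenspace_iff] at hv
      have hJv : Jc *ᵥ v = z • v := by simpa [Matrix.toLin'_apply] using hv
      have hAv : A *ᵥ v = ((t : ℂ) * z) • v := by
        rw [hA, Matrix.smul_mulVec, hJv, smul_smul]
      have hexpv : v = Complex.exp ((t : ℂ) * z) • v := by
        have := exp_mulVec_eigen A v ((t : ℂ) * z) hAv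
        rw [hAc, Matrix.one_mulVec] at this
        exact this
      have hone : Complex.exp ((t : ℂ) * z) = 1 := by
        obtain ⟨i, hi⟩ := Function.ne_iff.mp hv0
        have := congrFun hexpv i
        simp only [Pi.smul_apply, smul_eq_mul, Pi.zero_apply] at this hi
        have h' : (Complex.exp ((t : ℂ) * z) - 1) * v i = 0 := by
          rw [sub_mul, one_mul, ← this, sub_self]
        rcases mul_eq_zero.mp h' with h'' | h''
        · linear_combination h''
        · exact absurd h'' hi
      obtain ⟨n, hn⟩ := Complex.exp_eq_one_iff.mp hone
      have htc : (t : ℂ) ≠ 0 := by exact_mod_cast ht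
      refine ⟨if 0 < t then n else -n, ?_⟩
      have hz : z = n * (2 * Real.pi * Complex.I) / t := by
        field_simp at hn ⊢
        linear_combination hn
      rcases lt_or_gt_of_ne ht with htneg | htpos
      · rw [if_neg (by linarith), hz, abs_of_neg htneg]
        push_cast
        field_simp
      · rw [if_pos htpos, hz, abs_of_pos htpos]
        push_cast
        field_simp
  · rintro ⟨⟨P, D, hP, hD, hPD⟩, ω, hω, hspec⟩
    refine ⟨2 * Real.pi / ω, by positivity, ?_⟩
    set t : ℝ := 2 * Real.pi / ω with htdef
    apply map_ofReal_inj (d := d)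
    rw [exp_map_ofReal, map_ofReal_smul]
    have hmap1 : (1 : Matrix (Fin d) (Fin d) ℝ).map Complex.ofReal = 1 :=
      Matrix.map_one _ Complex.ofReal_zero Complex.ofReal_one
    rw [hmap1, ← hJc, hPD]
    have hconj : (t : ℂ) • (P * D * P⁻¹) = P * ((t : ℂ) • D) * P⁻¹ := by
      rw [Matrix.mul_smul, Matrix.smul_mul]
    rw [hconj, Matrix.exp_conj P _ hP]
    -- compute exp of the scaled diagonal
    have hDdiag : (t : ℂ) • D = Matrix.diagonal (fun i => (t : ℂ) * D i i) := by
      conv_lhs => rw [← hD.diagonal_diag]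
      rw [← Matrix.diagonal_smul]
      congr 1
    have hDspec : ∀ i, ∃ m : ℤ, D i i = Complex.I * ω * m := by
      intro i
      apply hspec
      have hu : spectrum ℂ Jc = spectrum ℂ D := by
        rw [hPD, show P = (hP.unit : Matrix (Fin d) (Fin d) ℂ) from (hP.unit_spec).symm,
          show ((hP.unit : Matrix (Fin d) (Fin d) ℂ))⁻¹
              = ((hP.unit⁻¹ : (Matrix (Fin d) (Fin d) ℂ)ˣ) : Matrix (Fin d) (Fin d) ℂ) from
            (Matrix.coe_units_inv hP.unit).symm]
        exact spectrum.units_conjugate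
      rw [hu, ← hD.diagonal_diag, spectrum_diagonal]
      exact ⟨i, by simp [Matrix.diag]⟩
    have hexpD : exp ((t : ℂ) • D) = 1 := by
      rw [hDdiag, Matrix.exp_diagonal]
      have : ∀ i, exp ((t : ℂ) * D i i) = 1 := by
        intro i
        obtain ⟨m, hm⟩ := hDspec i
        rw [← Complex.exp_eq_exp_ℂ, hm]
        have hωc : (ω : ℂ) ≠ 0 := by exact_mod_cast ne_of_gt hω
        have : (t : ℂ) * (Complex.I * ω * m) = m * (2 * Real.pi * Complex.I) := by
          rw [htdef]
          push_cast
          field_simp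
        rw [this]
        exact Complex.exp_int_mul_two_pi_mul_I m
      have hfun : (exp fun i => (t : ℂ) * D i i) = fun _ => 1 := by
        rw [Pi.exp_def]
        funext i
        exact this i
      rw [hfun, Matrix.diagonal_one]
    rw [hexpD, Matrix.mul_one,
      Matrix.mul_nonsing_inv P ((Matrix.isUnit_iff_isUnit_det P).1 hP)]
end

section
/- Let J be a nonzero real d×d matrix whose complexification is diagonalizable, and suppose ω₀ > 0 is such that every eigenvalue of the complexification of J lies in iω₀ℤ and ω₀ is maximal with this property (i.e. for every ω > ω₀ some eigenvalue is not in iωℤ). Then {t ∈ ℝ : exp(t·J) = 1} = (2π/ω₀)·ℤ. -/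
open scoped Matrix
open NormedSpace

lemma exp_map_ofReal' {d : ℕ} (A : Matrix (Fin d) (Fin d) ℝ) :
    (exp A).map Complex.ofReal = exp (A.map Complex.ofReal) := by
  letI : SeminormedRing (Matrix (Fin d) (Fin d) ℝ) := Matrix.linftyOpSemiNormedRing
  letI : NormedRing (Matrix (Fin d) (Fin d) ℝ) := Matrix.linftyOpNormedRing
  letI : NormedAlgebra ℝ (Matrix (Fin d) (Fin d) ℝ) := Matrix.linftyOpNormedAlgebra
  letI : SeminormedRing (Matrix (Fin d) (Fin d) ℂ) := Matrix.linftyOpSemiNormedRing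
  letI : NormedRing (Matrix (Fin d) (Fin d) ℂ) := Matrix.linftyOpNormedRing
  letI : NormedAlgebra ℝ (Matrix (Fin d) (Fin d) ℂ) := Matrix.linftyOpNormedAlgebra
  letI : NormedAlgebra ℚ (Matrix (Fin d) (Fin d) ℝ) := Matrix.linftyOpNormedAlgebra
  have h := map_exp (Complex.ofRealHom.mapMatrix :
      Matrix (Fin d) (Fin d) ℝ →+* Matrix (Fin d) (Fin d) ℂ)
    (continuous_id.matrix_map Complex.continuous_ofReal) A
  simp only [RingHom.mapMatrix_apply] at h
  rw [show (⇑Complex.ofRealHom : ℝ → ℂ) = Complex.ofReal from rfl] at h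
  exact h

/-- If the complexification of `J ≠ 0` is diagonalizable with all eigenvalues in `iω₀ℤ` and
`ω₀ > 0` is maximal with this property, then `{t : exp(tJ) = 1} = (2π/ω₀)ℤ`. -/
theorem setOf_exp_smul_eq_one (d : ℕ) (J : Matrix (Fin d) (Fin d) ℝ) (hJ : J ≠ 0)
    (hdiag : ∃ P D : Matrix (Fin d) (Fin d) ℂ, IsUnit P ∧ D.IsDiag ∧
      J.map Complex.ofReal = P * D * P⁻¹)
    (ω₀ : ℝ) (hω₀ : 0 < ω₀)
    (hspec : ∀ z ∈ spectrum ℂ (J.map Complex.ofReal), ∃ m : ℤ, z = Complex.I * ω₀ * m)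
    (hmax : ∀ ω : ℝ, ω₀ < ω →
      ∃ z ∈ spectrum ℂ (J.map Complex.ofReal), ∀ m : ℤ, z ≠ Complex.I * ω * m) :
    {t : ℝ | exp (t • J) = 1} = {t : ℝ | ∃ m : ℤ, t = 2 * Real.pi / ω₀ * m} := by
  obtain ⟨P, D, hP, hD, hPD⟩ := hdiag
  obtain ⟨u, hu⟩ := hP
  set v : Fin d → ℂ := fun i => D i i with hv
  have hDdiag : D = Matrix.diagonal v := (hD.diagonal_diag).symm
  have hPinv : P⁻¹ = (↑u⁻¹ : Matrix (Fin d) (Fin d) ℂ) := by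
    rw [Matrix.coe_units_inv, hu]
  have hone : (1 : Matrix (Fin d) (Fin d) ℝ).map Complex.ofReal = 1 :=
    Matrix.map_one _ Complex.ofReal_zero Complex.ofReal_one
  have hspecv : spectrum ℂ (J.map Complex.ofReal) = Set.range v := by
    rw [hPD, hPinv, ← hu, spectrum.units_conjugate, hDdiag, spectrum_diagonal]
  have hm : ∀ i, ∃ m : ℤ, v i = Complex.I * ω₀ * m := fun i =>
    hspec (v i) (hspecv ▸ Set.mem_range_self i)
  choose m hmv using hm
  have key : ∀ t : ℝ, exp (t • J) = 1 ↔ ∀ i, ∃ n : ℤ, t * ω₀ * m i = n * (2 * Real.pi) := by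
    intro t
    have hmap : (exp (t • J)).map Complex.ofReal
        = exp ((t : ℂ) • (J.map Complex.ofReal)) := by
      rw [exp_map_ofReal']
      congr 1
      ext i j
      simp [Matrix.map_apply]
    have step1 : exp (t • J) = 1 ↔ exp ((t : ℂ) • (J.map Complex.ofReal)) = 1 := by
      rw [← hmap]
      constructor
      · intro h; rw [h]; exact hone
      · intro h
        exact Matrix.map_injective Complex.ofReal_injective (h.trans hone.symm)
    have step2 : (t : ℂ) • (J.map Complex.ofReal)
        = (↑u : Matrix (Fin d) (Fin d) ℂ) * ((t : ℂ) • D) * (↑u⁻¹ : Matrix (Fin d) (Fin d) ℂ) := by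
      rw [hPD, hPinv, ← hu, Matrix.mul_smul, Matrix.smul_mul]
    have step3 : exp ((t : ℂ) • (J.map Complex.ofReal))
        = (↑u : Matrix (Fin d) (Fin d) ℂ) * exp ((t : ℂ) • D) * (↑u⁻¹ : Matrix (Fin d) (Fin d) ℂ) := by
      rw [step2, Matrix.exp_units_conj]
    have step4 : exp ((t : ℂ) • D)
        = Matrix.diagonal fun i => Complex.exp (t * v i) := by
      rw [hDdiag, ← Matrix.diagonal_smul, Matrix.exp_diagonal]
      refine congrArg Matrix.diagonal (funext fun i => ?_)
      rw [Pi.coe_exp, Pi.smul_apply, smul_eq_mul, Complex.exp_eq_exp_ℂ]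
    rw [step1, step3]
    have hdet : IsUnit ((↑u : Matrix (Fin d) (Fin d) ℂ)).det :=
      (Matrix.isUnit_iff_isUnit_det _).mp ⟨u, rfl⟩
    constructor
    · intro h
      have h3 : (↑u⁻¹ : Matrix (Fin d) (Fin d) ℂ) *
            ((↑u : Matrix (Fin d) (Fin d) ℂ) * exp ((t : ℂ) • D) *
              (↑u⁻¹ : Matrix (Fin d) (Fin d) ℂ)) * (↑u : Matrix (Fin d) (Fin d) ℂ)
          = exp ((t : ℂ) • D) := by
        simp [mul_assoc, Matrix.nonsing_inv_mul _ hdet, Matrix.mul_nonsing_inv _ hdet,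
          Matrix.nonsing_inv_mul_cancel_left _ _ hdet, Matrix.mul_nonsing_inv_cancel_left _ _ hdet]
      rw [h] at h3
      have h2 : exp ((t : ℂ) • D) = 1 := by
        rw [← h3]; simp [Matrix.nonsing_inv_mul _ hdet]
      rw [step4] at h2
      intro i
      have h4 : Complex.exp (t * v i) = 1 :=
        congrFun (Matrix.diagonal_injective (h2.trans (Matrix.diagonal_one).symm)) i
      rw [hmv i, Complex.exp_eq_one_iff] at h4
      obtain ⟨n, hn⟩ := h4
      refine ⟨n, ?_⟩
      have h5 : ((t * ω₀ * m i : ℝ) : ℂ) * Complex.I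
          = ((n * (2 * Real.pi) : ℝ) : ℂ) * Complex.I := by
        push_cast
        rw [show (t:ℂ) * ω₀ * (m i:ℂ) * Complex.I
          = (t:ℂ) * (Complex.I * ω₀ * (m i:ℂ)) by ring, hn]
        ring
      have := mul_right_cancel₀ Complex.I_ne_zero h5
      exact_mod_cast this
    · intro h
      have h2 : exp ((t : ℂ) • D) = 1 := by
        rw [step4]
        rw [show (1 : Matrix (Fin d) (Fin d) ℂ) = Matrix.diagonal (fun _ => 1) from
          (Matrix.diagonal_one).symm]
        refine congrArg Matrix.diagonal (funext fun i => ?_)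
        obtain ⟨n, hn⟩ := h i
        rw [hmv i, Complex.exp_eq_one_iff]
        refine ⟨n, ?_⟩
        have h5 : ((t * ω₀ * m i : ℝ) : ℂ) = ((n * (2 * Real.pi) : ℝ) : ℂ) := by
          exact_mod_cast hn
        push_cast at h5 ⊢
        rw [show (t : ℂ) * (Complex.I * ω₀ * m i) = (t:ℂ) * ω₀ * (m i:ℂ) * Complex.I by ring, h5]
        ring
      rw [h2, mul_one, Units.mul_inv]
  ext t
  simp only [Set.mem_setOf_eq, key t]
  constructor
  · intro h
    set H : AddSubgroup ℤ :=
      { carrier := {a : ℤ | ∃ n : ℤ, t * ω₀ * a = n * (2 * Real.pi)}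
        zero_mem' := ⟨0, by simp⟩
        add_mem' := by
          rintro a b ⟨n, hn⟩ ⟨k, hk⟩
          refine ⟨n + k, ?_⟩
          push_cast
          linear_combination hn + hk
        neg_mem' := by
          rintro a ⟨n, hn⟩
          refine ⟨-n, ?_⟩
          push_cast
          linear_combination -hn } with hH
    obtain ⟨g, hg⟩ := Int.subgroup_cyclic H
    have hmg : ∀ i, ∃ c : ℤ, c * g = m i := by
      intro i
      have hmem : m i ∈ H := h i
      rw [hg, AddSubgroup.mem_closure_singleton] at hmem
      obtain ⟨n, hn⟩ := hmem
      exact ⟨n, by simpa [zsmul_eq_mul] using hn⟩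
    have hex : ∃ i, m i ≠ 0 := by
      by_contra hall
      push_neg at hall
      apply hJ
      have hv0 : v = 0 := by
        funext i; rw [hmv i, hall i]; simp
      have hJc0 : J.map Complex.ofReal = 0 := by
        rw [hPD, hDdiag, hv0, show Matrix.diagonal (0 : Fin d → ℂ) = 0 from Matrix.diagonal_zero,
          Matrix.mul_zero, Matrix.zero_mul]
      have hzero : (0 : Matrix (Fin d) (Fin d) ℝ).map Complex.ofReal = 0 :=
        Matrix.map_zero _ Complex.ofReal_zero
      exact Matrix.map_injective Complex.ofReal_injective (hJc0.trans hzero.symm)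
    have hg0 : g ≠ 0 := by
      rintro rfl
      obtain ⟨i, hi⟩ := hex
      obtain ⟨c, hc⟩ := hmg i
      simp at hc
      exact hi hc.symm
    have habs : |g| = 1 := by
      by_contra habs
      have h1 : 1 < |g| := lt_of_le_of_ne (Int.one_le_abs hg0) (Ne.symm habs)
      have h2g : (2 : ℝ) ≤ ((|g| : ℤ) : ℝ) := by exact_mod_cast (by omega : (2:ℤ) ≤ |g|)
      have hωgt : ω₀ < ((|g| : ℤ) : ℝ) * ω₀ := by nlinarith
      obtain ⟨z, hz1, hz2⟩ := hmax (((|g| : ℤ) : ℝ) * ω₀) hωgt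
      rw [hspecv] at hz1
      obtain ⟨i, hi⟩ := hz1
      obtain ⟨c, hc⟩ := hmg i
      apply hz2 (c * Int.sign g)
      rw [← hi, hmv i]
      have hmi : m i = (c * Int.sign g) * |g| := by
        rw [← hc]
        rcases hg0.lt_or_gt with hg' | hg'
        · rw [Int.sign_eq_neg_one_of_neg hg', abs_of_neg hg']; ring
        · rw [Int.sign_eq_one_of_pos hg', abs_of_pos hg']; ring
      have hmiC : ((m i : ℤ) : ℂ) = ((c * Int.sign g : ℤ) : ℂ) * ((|g| : ℤ) : ℂ) := by
        exact_mod_cast hmi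
      rw [Complex.ofReal_mul, Complex.ofReal_intCast, hmiC]
      push_cast
      ring
    have h1H : (1 : ℤ) ∈ H := by
      rw [hg, AddSubgroup.mem_closure_singleton]
      refine ⟨g, ?_⟩
      rcases (abs_eq (by norm_num : (0:ℤ) ≤ 1)).mp habs with h' | h' <;>
        · rw [h']; simp [zsmul_eq_mul]
    obtain ⟨n, hn⟩ := h1H
    refine ⟨n, ?_⟩
    have hω : ω₀ ≠ 0 := ne_of_gt hω₀
    push_cast at hn
    field_simp
    linear_combination hn
  · rintro ⟨k, rfl⟩ i
    refine ⟨k * m i, ?_⟩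
    have hω : ω₀ ≠ 0 := ne_of_gt hω₀
    push_cast
    field_simp
end

section
/- Let J be a real d×d matrix and let G(J) be the group with underlying set ℝ^d × ℝ and multiplication (v,t)·(u,s) = (v + exp(t·J)·u, t+s). Then the center of G(J) equals {(u,s) ∈ ℝ^d × ℝ : J·u = 0 and exp(s·J) = 1}. -/
open scoped Matrix
open NormedSpace

noncomputable section

/-- The almost Abelian group `G(J) = ℝ^d ⋊ ℝ` with multiplication
`(v,t)·(u,s) = (v + exp(tJ)u, t+s)`. -/
@[ext] structure GJ (d : ℕ) (J : Matrix (Fin d) (Fin d) ℝ) where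
  v : Fin d → ℝ
  t : ℝ

namespace GJ

variable {d : ℕ} {J : Matrix (Fin d) (Fin d) ℝ}

lemma exp_smul_add (a b : ℝ) (J : Matrix (Fin d) (Fin d) ℝ) :
    exp ((a + b) • J) = exp (a • J) * exp (b • J) := by
  rw [add_smul]
  exact Matrix.exp_add_of_commute _ _ (((Commute.refl J).smul_left a).smul_right b)

instance : Group (GJ d J) where
  mul p q := ⟨p.v + (exp (p.t • J)).mulVec q.v, p.t + q.t⟩
  one := ⟨0, 0⟩
  inv p := ⟨-(exp ((-p.t) • J)).mulVec p.v, -p.t⟩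
  mul_assoc a b c := by
    ext i
    · show (a.v + (exp (a.t • J)).mulVec b.v + (exp ((a.t + b.t) • J)).mulVec c.v) i = _
      show _ = (a.v + (exp (a.t • J)).mulVec (b.v + (exp (b.t • J)).mulVec c.v)) i
      rw [exp_smul_add, ← Matrix.mulVec_mulVec, Matrix.mulVec_add, add_assoc]
    · exact add_assoc a.t b.t c.t
  one_mul a := by
    ext i
    · show ((0 : Fin d → ℝ) + (exp ((0 : ℝ) • J)).mulVec a.v) i = a.v i
      rw [zero_smul, exp_zero, Matrix.one_mulVec, zero_add]
    · exact zero_add a.t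
  mul_one a := by
    ext i
    · show (a.v + (exp (a.t • J)).mulVec 0) i = a.v i
      rw [Matrix.mulVec_zero, add_zero]
    · exact add_zero a.t
  inv_mul_cancel a := by
    ext i
    · show (-(exp ((-a.t) • J)).mulVec a.v + (exp ((-a.t) • J)).mulVec a.v) i
        = (0 : Fin d → ℝ) i
      rw [neg_add_cancel]
    · exact neg_add_cancel a.t

/-- The topology of `G(J)` is that of the underlying space `ℝ^d × ℝ`. -/
instance : TopologicalSpace (GJ d J) :=
  TopologicalSpace.induced (fun g => (g.v, g.t)) inferInstance

lemma mul_def (p q : GJ d J) :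
    p * q = ⟨p.v + (exp (p.t • J)).mulVec q.v, p.t + q.t⟩ := rfl

end GJ

section Helpers

attribute [local instance] Matrix.linftyOpNormedAddCommGroup Matrix.linftyOpNormedRing
  Matrix.linftyOpNormedAlgebra

variable {d : ℕ} (J : Matrix (Fin d) (Fin d) ℝ)

def Lu (u : Fin d → ℝ) : Matrix (Fin d) (Fin d) ℝ →L[ℝ] (Fin d → ℝ) :=
  LinearMap.toContinuousLinearMap
  { toFun := fun M => M *ᵥ u
    map_add' := fun M N => Matrix.add_mulVec M N u
    map_smul' := fun c M => Matrix.smul_mulVec c M u }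

lemma exp_mulVec_eq (u : Fin d → ℝ) (h : J *ᵥ u = 0) (t : ℝ) : exp (t • J) *ᵥ u = u := by
  have hpow : ∀ n : ℕ, n ≠ 0 → (J ^ n) *ᵥ u = 0 := by
    intro n hn
    obtain ⟨m, rfl⟩ := Nat.exists_eq_succ_of_ne_zero hn
    rw [pow_succ, ← Matrix.mulVec_mulVec, h, Matrix.mulVec_zero]
  have hs : Summable (fun n : ℕ => ((n.factorial : ℝ))⁻¹ • (t • J) ^ n) :=
    NormedSpace.expSeries_summable' (𝕂 := ℝ) (t • J)
  have hexp : exp (t • J) = ∑' n : ℕ, ((n.factorial : ℝ))⁻¹ • (t • J) ^ n :=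
    congrFun (NormedSpace.exp_eq_tsum (𝕂 := ℝ)) (t • J)
  have hmap := (Lu (d := d) u).map_tsum hs
  have : exp (t • J) *ᵥ u = ∑' n : ℕ, Lu (d := d) u (((n.factorial : ℝ))⁻¹ • (t • J) ^ n) := by
    rw [hexp, ← hmap]; rfl
  rw [this, tsum_eq_single 0]
  · simp [Lu]
  · intro n hn
    rw [map_smul]
    have : Lu (d := d) u ((t • J) ^ n) = 0 := by
      show (t • J) ^ n *ᵥ u = 0
      rw [smul_pow, Matrix.smul_mulVec, hpow n hn, smul_zero]
    rw [this, smul_zero]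

lemma mulVec_zero_of_forall (u : Fin d → ℝ) (h : ∀ t : ℝ, exp (t • J) *ᵥ u = u) :
    J *ᵥ u = 0 := by
  have h1 : HasDerivAt (fun t : ℝ => exp (t • J)) (exp ((0:ℝ) • J) * J) 0 :=
    hasDerivAt_exp_smul_const (𝕂 := ℝ) J 0
  have h2 : HasDerivAt (fun t : ℝ => Lu (d := d) u (exp (t • J)))
      (Lu (d := d) u (exp ((0:ℝ) • J) * J)) 0 :=
    (Lu (d := d) u).hasFDerivAt.comp_hasDerivAt 0 h1
  have h3 : HasDerivAt (fun t : ℝ => Lu (d := d) u (exp (t • J))) 0 0 := by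
    have : (fun t : ℝ => Lu (d := d) u (exp (t • J))) = fun _ => u := by
      funext t; exact h t
    rw [this]; exact hasDerivAt_const 0 u
  have := h2.unique h3
  rw [zero_smul, exp_zero, one_mul] at this
  exact this

lemma exp_eq_one_of_forall (s : ℝ) (h : ∀ v : Fin d → ℝ, exp (s • J) *ᵥ v = v) : exp (s • J) = 1 := by
  refine Matrix.toLin'.injective (LinearMap.ext fun v => ?_)
  simp [Matrix.toLin'_apply, Matrix.toLin'_one, h v]

end Helpers

/-- The center of `G(J)` is `{(u,s) : J·u = 0 ∧ exp(sJ) = 1}`. -/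
theorem GJ.center_eq (d : ℕ) (J : Matrix (Fin d) (Fin d) ℝ) :
    (Subgroup.center (GJ d J) : Set (GJ d J)) =
      {g : GJ d J | J.mulVec g.v = 0 ∧ exp (g.t • J) = 1} := by
  refine Set.ext fun g => ?_
  rw [SetLike.mem_coe, Set.mem_setOf_eq]
  constructor
  · intro hg
    have hc := Subgroup.mem_center_iff.mp hg
    have hfix : ∀ t : ℝ, exp (t • J) *ᵥ g.v = g.v := by
      intro t
      have := congrArg GJ.v (hc ⟨0, t⟩)
      simp only [GJ.mul_def, Matrix.mulVec_zero, add_zero, zero_add] at this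
      exact this
    refine ⟨mulVec_zero_of_forall J g.v hfix, ?_⟩
    refine exp_eq_one_of_forall J g.t fun v => ?_
    have := congrArg GJ.v (hc ⟨v, 0⟩)
    simp only [GJ.mul_def, zero_smul, exp_zero, Matrix.one_mulVec] at this
    have h2 : v + g.v = g.v + exp (g.t • J) *ᵥ v := this
    rw [add_comm v g.v] at h2
    exact (add_right_injective g.v h2).symm
  · rintro ⟨hJ, hexp⟩
    refine Subgroup.mem_center_iff.mpr fun h => ?_
    have h1 : exp (h.t • J) *ᵥ g.v = g.v := exp_mulVec_eq J g.v hJ h.t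
    ext
    · show (h.v + exp (h.t • J) *ᵥ g.v) _ = (g.v + exp (g.t • J) *ᵥ h.v) _
      rw [h1, hexp, Matrix.one_mulVec, add_comm]
    · exact add_comm h.t g.t
end
end

section
/- Let J be a nonzero real d×d matrix and G(J) the topological group with underlying space ℝ^d × ℝ (product topology) and multiplication (v,t)·(u,s) = (v + exp(t·J)·u, t+s). Let N be a normal subgroup of G(J) that is discrete (in the subspace topology). Then N is contained in the center of G(J), and there exist k ≤ dim(ker J) + 1 and elements (v₁,t₁),…,(v_k,t_k) of the center of G(J) that are linearly independent as vectors of ℝ^{d+1} such that N is precisely the set of products (v₁,t₁)^{m₁}·…·(v_k,t_k)^{m_k} over (m₁,…,m_k) ∈ ℤ^k; in particular N is a free abelian group of rank k ≤ dim(ker J) + 1. -/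
open scoped Matrix
open NormedSpace

noncomputable section

section Aux

open NormedSpace Module

variable {d : ℕ}

private lemma aux_exp {A : Type*} [NormedRing A] [NormedAlgebra ℝ A] [CompleteSpace A] (x : A) :
    exp x = 1 + (∑' n : ℕ, (((n + 1).factorial : ℝ))⁻¹ • x ^ n) * x := by
  have hsum : Summable fun n : ℕ => (((n + 1).factorial : ℝ))⁻¹ • x ^ n := by
    refine Summable.of_norm_bounded (norm_expSeries_summable' (𝕂 := ℝ) x) ?_
    intro n
    rw [norm_smul, norm_smul]
    gcongr
    rw [Real.norm_eq_abs, Real.norm_eq_abs, abs_inv, abs_inv]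
    refine inv_anti₀ (by positivity) ?_
    rw [abs_of_nonneg (by positivity), abs_of_nonneg (by positivity)]
    exact_mod_cast Nat.factorial_le (Nat.le_succ n)
  have h2 : (∑' n : ℕ, (((n + 1).factorial : ℝ))⁻¹ • x ^ n) * x
      = ∑' n : ℕ, (((n + 1).factorial : ℝ))⁻¹ • x ^ (n + 1) := by
    rw [← hsum.tsum_mul_right]
    congr 1; funext n; rw [smul_mul_assoc, pow_succ]
  rw [exp_eq_tsum ℝ, h2]
  show (∑' (n : ℕ), (↑n.factorial : ℝ)⁻¹ • x ^ n) = _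
  rw [Summable.tsum_eq_zero_add (expSeries_summable' (𝕂 := ℝ) x)]
  simp [Nat.factorial]

lemma exp_matS (A : Matrix (Fin d) (Fin d) ℝ) : exp A = 1 + matS A * A := by
  letI : SeminormedRing (Matrix (Fin d) (Fin d) ℝ) := Matrix.linftyOpSemiNormedRing
  letI : NormedRing (Matrix (Fin d) (Fin d) ℝ) := Matrix.linftyOpNormedRing
  letI : NormedAlgebra ℝ (Matrix (Fin d) (Fin d) ℝ) := Matrix.linftyOpNormedAlgebra
  exact aux_exp A

lemma exp_mulVec_of_ker {A : Matrix (Fin d) (Fin d) ℝ} {v : Fin d → ℝ}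
    (h : A.mulVec v = 0) : (exp A).mulVec v = v := by
  rw [exp_matS, Matrix.add_mulVec, Matrix.one_mulVec, ← Matrix.mulVec_mulVec, h,
    Matrix.mulVec_zero, add_zero]

lemma exp_cont (J : Matrix (Fin d) (Fin d) ℝ) : Continuous fun s : ℝ => exp (s • J) := by
  letI : SeminormedRing (Matrix (Fin d) (Fin d) ℝ) := Matrix.linftyOpSemiNormedRing
  letI : NormedRing (Matrix (Fin d) (Fin d) ℝ) := Matrix.linftyOpNormedRing
  letI : NormedAlgebra ℝ (Matrix (Fin d) (Fin d) ℝ) := Matrix.linftyOpNormedAlgebra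
  exact continuous_iff_continuousAt.2 fun t => (hasDerivAt_exp_smul_const J t).continuousAt

/-- The linear map `A ↦ A.mulVec v`. -/
private def mulVecConstLM (v : Fin d → ℝ) : Matrix (Fin d) (Fin d) ℝ →ₗ[ℝ] (Fin d → ℝ) where
  toFun A := A.mulVec v
  map_add' A B := Matrix.add_mulVec A B v
  map_smul' c A := Matrix.smul_mulVec c A v

lemma continuous_mulVec_const (v : Fin d → ℝ) :
    Continuous fun A : Matrix (Fin d) (Fin d) ℝ => A.mulVec v :=
  (mulVecConstLM v).continuous_of_finiteDimensional

lemma ker_of_fixed {J : Matrix (Fin d) (Fin d) ℝ} {v : Fin d → ℝ}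
    (h : ∀ s : ℝ, (exp (s • J)).mulVec v = v) : J.mulVec v = 0 := by
  letI : SeminormedRing (Matrix (Fin d) (Fin d) ℝ) := Matrix.linftyOpSemiNormedRing
  letI : NormedRing (Matrix (Fin d) (Fin d) ℝ) := Matrix.linftyOpNormedRing
  letI : NormedAlgebra ℝ (Matrix (Fin d) (Fin d) ℝ) := Matrix.linftyOpNormedAlgebra
  let Lc : Matrix (Fin d) (Fin d) ℝ →L[ℝ] (Fin d → ℝ) :=
    LinearMap.toContinuousLinearMap (mulVecConstLM v)
  have h1 : HasDerivAt (fun s : ℝ => exp (s • J)) (exp ((0:ℝ) • J) * J) 0 :=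
    hasDerivAt_exp_smul_const J (0:ℝ)
  have h2 : HasDerivAt (fun s : ℝ => Lc (exp (s • J))) (Lc (exp ((0:ℝ) • J) * J)) 0 :=
    Lc.hasFDerivAt.comp_hasDerivAt 0 h1
  have heq : (fun s : ℝ => Lc (exp (s • J))) = fun _ : ℝ => v := funext fun s => h s
  rw [heq] at h2
  have h3 : Lc (exp ((0:ℝ) • J) * J) = 0 := h2.unique (hasDerivAt_const 0 v)
  rw [zero_smul, exp_zero, one_mul] at h3
  exact h3

end Aux

namespace GJ

variable {d : ℕ} {J : Matrix (Fin d) (Fin d) ℝ}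

lemma inv_def (p : GJ d J) : p⁻¹ = ⟨-(exp ((-p.t) • J)).mulVec p.v, -p.t⟩ := rfl

lemma one_def : (1 : GJ d J) = ⟨0, 0⟩ := rfl

/-- The underlying vector of an element of `G(J)`. -/
def vec (x : GJ d J) : (Fin d → ℝ) × ℝ := (x.v, x.t)

lemma vec_injective : Function.Injective (vec (d := d) (J := J)) := by
  intro a b h
  have h1 : a.v = b.v := congrArg Prod.fst h
  have h2 : a.t = b.t := congrArg Prod.snd h
  ext i
  · exact congrFun h1 i
  · exact h2

lemma central_exp {p : GJ d J} (hp : p ∈ Subgroup.center (GJ d J)) :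
    exp (p.t • J) = 1 := by
  have key : ∀ w : Fin d → ℝ, (exp (p.t • J)).mulVec w = w := by
    intro w
    have h := Subgroup.mem_center_iff.mp hp (⟨w, 0⟩ : GJ d J)
    have hv : w + (exp ((0:ℝ) • J)).mulVec p.v
        = p.v + (exp (p.t • J)).mulVec w := congrArg GJ.v h
    rw [zero_smul, exp_zero, Matrix.one_mulVec, add_comm w p.v] at hv
    exact (add_left_cancel hv).symm
  ext i j
  have h1 : (exp (p.t • J))ᵀ j = Pi.single j 1 := by
    show (exp (p.t • J)).col j = _
    rw [← Matrix.mulVec_single_one]; exact key _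
  have h2 := congrFun h1 i
  rw [Matrix.transpose_apply] at h2
  rw [h2, Matrix.one_apply, Pi.single_apply]

lemma central_fixed {p : GJ d J} (hp : p ∈ Subgroup.center (GJ d J)) (s : ℝ) :
    (exp (s • J)).mulVec p.v = p.v := by
  have h := Subgroup.mem_center_iff.mp hp (⟨0, s⟩ : GJ d J)
  have hv : (0 : Fin d → ℝ) + (exp (s • J)).mulVec p.v
      = p.v + (exp (p.t • J)).mulVec 0 := congrArg GJ.v h
  rw [Matrix.mulVec_zero, add_zero, zero_add] at hv
  exact hv

lemma central_ker {p : GJ d J} (hp : p ∈ Subgroup.center (GJ d J)) :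
    J.mulVec p.v = 0 :=
  ker_of_fixed (fun s => central_fixed hp s)

lemma vec_mul_central {p : GJ d J} (hp : p ∈ Subgroup.center (GJ d J)) (q : GJ d J) :
    vec (p * q) = vec p + vec q := by
  show (p.v + (exp (p.t • J)).mulVec q.v, p.t + q.t) = _
  rw [central_exp hp, Matrix.one_mulVec]
  rfl

lemma vec_inv_central {p : GJ d J} (hp : p ∈ Subgroup.center (GJ d J)) :
    vec p⁻¹ = -vec p := by
  show (-(exp ((-p.t) • J)).mulVec p.v, -p.t) = -(p.v, p.t)
  rw [exp_mulVec_of_ker (by rw [Matrix.smul_mulVec, central_ker hp, smul_zero])]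
  rfl

lemma vec_one : vec (1 : GJ d J) = 0 := rfl

lemma vec_zpow_central {p : GJ d J} (hp : p ∈ Subgroup.center (GJ d J)) (m : ℤ) :
    vec (p ^ m) = m • vec p := by
  have hn : ∀ n : ℕ, vec (p ^ n) = n • vec p := by
    intro n
    induction n with
    | zero => simp [vec_one]
    | succ n ih =>
        rw [pow_succ, vec_mul_central (pow_mem hp n), ih, succ_nsmul]
  cases m with
  | ofNat n => simpa using hn n
  | negSucc n => rw [zpow_negSucc, vec_inv_central (pow_mem hp (n + 1)), hn, negSucc_zsmul]

lemma vec_list_prod (l : List (GJ d J)) (h : ∀ p ∈ l, p ∈ Subgroup.center (GJ d J)) :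
    vec l.prod = (l.map vec).sum := by
  induction l with
  | nil => rfl
  | cons a l ih =>
      rw [List.prod_cons, List.map_cons, List.sum_cons,
        vec_mul_central (h a (by simp)), ih (fun p hp => h p (by simp [hp]))]

lemma conj_formula (g n : GJ d J) :
    g * n * g⁻¹ = ⟨g.v + (exp (g.t • J)).mulVec n.v - (exp (n.t • J)).mulVec g.v, n.t⟩ := by
  have hs : g.t + n.t + -g.t = n.t := by ring
  have hexp : exp ((g.t + n.t) • J) * exp ((-g.t) • J) = exp (n.t • J) := by
    rw [← exp_smul_add, hs]
  ext i
  · show (g.v + (exp (g.t • J)).mulVec n.v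
        + (exp ((g.t + n.t) • J)).mulVec (-(exp ((-g.t) • J)).mulVec g.v)) i
      = (g.v + (exp (g.t • J)).mulVec n.v - (exp (n.t • J)).mulVec g.v) i
    rw [Matrix.mulVec_neg, Matrix.mulVec_mulVec, hexp, ← sub_eq_add_neg]
  · exact hs

lemma normal_discrete_le_center (N : Subgroup (GJ d J)) (hnorm : N.Normal)
    (hdisc : DiscreteTopology N) : N ≤ Subgroup.center (GJ d J) := by
  intro n hn
  rw [Subgroup.mem_center_iff]
  intro g
  let Fm : (Fin d → ℝ) × ℝ → N := fun ws =>
    ⟨(⟨ws.1, ws.2⟩ : GJ d J) * n * (⟨ws.1, ws.2⟩ : GJ d J)⁻¹, hnorm.conj_mem n hn _⟩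
  have hcont : Continuous Fm := by
    apply Continuous.subtype_mk
    apply continuous_induced_rng.mpr
    have hform : ((fun g : GJ d J => (g.v, g.t)) ∘ fun ws : (Fin d → ℝ) × ℝ =>
          (⟨ws.1, ws.2⟩ : GJ d J) * n * (⟨ws.1, ws.2⟩ : GJ d J)⁻¹)
        = fun ws => (ws.1 + (exp (ws.2 • J)).mulVec n.v
            - (exp (n.t • J)).mulVec ws.1, n.t) := by
      funext ws
      rw [Function.comp_apply, conj_formula]
    rw [hform]
    refine Continuous.prodMk ?_ continuous_const
    have c2 : Continuous fun ws : (Fin d → ℝ) × ℝ => (exp (ws.2 • J)).mulVec n.v :=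
      (continuous_mulVec_const n.v).comp ((exp_cont J).comp continuous_snd)
    have c3 : Continuous fun ws : (Fin d → ℝ) × ℝ => (exp (n.t • J)).mulVec ws.1 :=
      ((exp (n.t • J)).mulVecLin.continuous_of_finiteDimensional).comp continuous_fst
    exact (continuous_fst.add c2).sub c3
  have hconst : Fm (g.v, g.t) = Fm (0, 0) :=
    PreconnectedSpace.constant inferInstance hcont
  have h1 : g * n * g⁻¹ = 1 * n * (1 : GJ d J)⁻¹ := congrArg Subtype.val hconst
  rw [inv_one, mul_one, one_mul] at h1
  calc g * n = g * n * g⁻¹ * g := by rw [inv_mul_cancel_right]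
  _ = n * g := by rw [h1]

end GJ

/-- Every discrete normal subgroup `N` of `G(J)` is central and is the free abelian group on
`k ≤ dim ker J + 1` linearly independent central elements: `N` consists precisely of the
products `g₁^{m₁} ⋯ g_k^{m_k}`, `m ∈ ℤ^k`. -/
theorem GJ.discrete_normal_subgroup_structure (d : ℕ) (J : Matrix (Fin d) (Fin d) ℝ)
    (hJ : J ≠ 0) (N : Subgroup (GJ d J)) (hnorm : N.Normal) (hdisc : DiscreteTopology N) :
    N ≤ Subgroup.center (GJ d J) ∧
    ∃ k : ℕ, k ≤ Module.finrank ℝ (LinearMap.ker J.mulVecLin) + 1 ∧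
      ∃ g : Fin k → GJ d J, (∀ i, g i ∈ Subgroup.center (GJ d J)) ∧
        LinearIndependent ℝ (fun i : Fin k => (((g i).v, (g i).t) : (Fin d → ℝ) × ℝ)) ∧
        ∀ x : GJ d J, x ∈ N ↔ ∃ m : Fin k → ℤ, x = (List.ofFn fun i => g i ^ m i).prod := by
  classical
  have hcen : N ≤ Subgroup.center (GJ d J) := GJ.normal_discrete_le_center N hnorm hdisc
  refine ⟨hcen, ?_⟩
  let E := (Fin d → ℝ) × ℝ
  let Lgrp : AddSubgroup E :=
    { carrier := GJ.vec '' (N : Set (GJ d J))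
      zero_mem' := ⟨1, N.one_mem, rfl⟩
      add_mem' := by
        rintro a b ⟨x, hx, rfl⟩ ⟨y, hy, rfl⟩
        exact ⟨x * y, N.mul_mem hx hy, GJ.vec_mul_central (hcen hx) y⟩
      neg_mem' := by
        rintro a ⟨x, hx, rfl⟩
        exact ⟨x⁻¹, N.inv_mem hx, GJ.vec_inv_central (hcen hx)⟩ }
  let L : Submodule ℤ E := AddSubgroup.toIntSubmodule Lgrp
  have hmemL : ∀ y : E, y ∈ L ↔ ∃ x ∈ N, GJ.vec x = y := by
    intro y
    constructor
    · rintro ⟨x, hx, rfl⟩; exact ⟨x, hx, rfl⟩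
    · rintro ⟨x, hx, rfl⟩; exact ⟨x, hx, rfl⟩
  have hNL : ∀ y : E, y ∈ L → (⟨y.1, y.2⟩ : GJ d J) ∈ N := by
    intro y hy
    obtain ⟨x, hx, rfl⟩ := (hmemL y).mp hy
    exact hx
  let e : L ≃ₜ N :=
    { toFun := fun y => ⟨⟨y.1.1, y.1.2⟩, hNL y.1 y.2⟩
      invFun := fun x => ⟨GJ.vec x.1, (hmemL _).mpr ⟨x.1, x.2, rfl⟩⟩
      left_inv := fun y => rfl
      right_inv := fun x => rfl
      continuous_toFun := by
        apply Continuous.subtype_mk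
        apply continuous_induced_rng.mpr
        exact (continuous_fst.comp continuous_subtype_val).prodMk
          (continuous_snd.comp continuous_subtype_val)
      continuous_invFun := by
        apply Continuous.subtype_mk
        have hvc : Continuous (GJ.vec : GJ d J → (Fin d → ℝ) × ℝ) := continuous_induced_dom
        exact hvc.comp continuous_subtype_val }
  haveI hLdisc : DiscreteTopology L :=
    DiscreteTopology.of_continuous_injective (f := ⇑e) e.continuous e.injective
  let F : Submodule ℝ E := Submodule.span ℝ (L : Set E)
  let f : F →ₗ[ℝ] E := F.subtype
  let L₀ : Submodule ℤ F := L.comap (f.restrictScalars ℤ)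
  have h_img : ⇑f '' L₀ = (L : Set E) := by
    rw [← LinearMap.coe_restrictScalars ℤ f, ← Submodule.map_coe (f.restrictScalars ℤ),
      Submodule.map_comap_eq_self]
    exact fun x hx => LinearMap.mem_range.mpr ⟨⟨x, Submodule.subset_span hx⟩, rfl⟩
  haveI hL₀disc : DiscreteTopology L₀ := by
    refine DiscreteTopology.preimage_of_continuous_injective (L : Set E) ?_
      (Submodule.injective_subtype F)
    exact f.continuous_of_finiteDimensional
  haveI hzl : IsZLattice ℝ L₀ := ⟨by
    rw [← (Submodule.map_injective_of_injective (Submodule.injective_subtype F)).eq_iff,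
      Submodule.map_span, Submodule.map_top, Submodule.range_subtype]
    exact congrArg (Submodule.span ℝ) h_img⟩
  haveI : Module.Finite ℤ L₀ := ZLattice.module_finite ℝ L₀
  haveI : Module.Free ℤ L₀ := ZLattice.module_free ℝ L₀
  have hrank : Module.finrank ℤ L₀ = Module.finrank ℝ F := ZLattice.rank ℝ L₀
  let Φ : (↥(LinearMap.ker J.mulVecLin) × ℝ) →ₗ[ℝ] E :=
    ((LinearMap.ker J.mulVecLin).subtype).prodMap LinearMap.id
  have hFle : F ≤ LinearMap.range Φ := by
    rw [Submodule.span_le]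
    rintro y hy
    obtain ⟨x, hx, rfl⟩ := (hmemL y).mp hy
    exact LinearMap.mem_range.mpr ⟨(⟨x.v, GJ.central_ker (hcen hx)⟩, x.t), rfl⟩
  have hkle : Module.finrank ℝ F ≤ Module.finrank ℝ (LinearMap.ker J.mulVecLin) + 1 := by
    have h1 : Module.finrank ℝ F ≤ Module.finrank ℝ (LinearMap.range Φ) :=
      Submodule.finrank_mono hFle
    have h2 : Module.finrank ℝ (LinearMap.range Φ)
        ≤ Module.finrank ℝ (↥(LinearMap.ker J.mulVecLin) × ℝ) := Φ.finrank_range_le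
    have h3 : Module.finrank ℝ (↥(LinearMap.ker J.mulVecLin) × ℝ)
        = Module.finrank ℝ (LinearMap.ker J.mulVecLin) + 1 := by
      rw [Module.finrank_prod, Module.finrank_self]
    omega
  set k := Module.finrank ℤ L₀ with hk
  let b₀ : Module.Basis (Fin k) ℤ L₀ := (Module.Free.chooseBasis ℤ L₀).reindex
    (Fintype.equivFinOfCardEq (Module.finrank_eq_card_chooseBasisIndex ℤ L₀).symm)
  let u : Fin k → E := fun i => ((b₀ i : F) : E)
  let g : Fin k → GJ d J := fun i => ⟨(u i).1, (u i).2⟩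
  have huL : ∀ i, u i ∈ L := fun i => (b₀ i).2
  have hgN : ∀ i, g i ∈ N := by
    intro i
    obtain ⟨x, hx, hvx⟩ := (hmemL (u i)).mp (huL i)
    have hgi : g i = x := by
      show (⟨(u i).1, (u i).2⟩ : GJ d J) = x
      rw [← hvx]; rfl
    rw [hgi]; exact hx
  refine ⟨k, le_trans (le_of_eq hrank) hkle, g, fun i => hcen (hgN i), ?_, ?_⟩
  · have hli := ((b₀.ofZLatticeBasis ℝ L₀).linearIndependent).map'
      F.subtype (Submodule.ker_subtype F)
    have heq : (⇑F.subtype ∘ ⇑(b₀.ofZLatticeBasis ℝ L₀)) = u := by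
      funext i
      show ((b₀.ofZLatticeBasis ℝ L₀) i : E) = u i
      rw [Module.Basis.ofZLatticeBasis_apply]
    rw [heq] at hli
    exact hli
  · intro x
    constructor
    · intro hx
      have hxF : GJ.vec x ∈ F := Submodule.subset_span ((hmemL _).mpr ⟨x, hx, rfl⟩)
      have hxL₀ : (⟨GJ.vec x, hxF⟩ : F) ∈ L₀ := (hmemL _).mpr ⟨x, hx, rfl⟩
      set xx : L₀ := ⟨⟨GJ.vec x, hxF⟩, hxL₀⟩ with hxx
      refine ⟨fun i => b₀.repr xx i, ?_⟩
      apply GJ.vec_injective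
      let ψ : L₀ →+ E := (f.toAddMonoidHom).comp (L₀.subtype.toAddMonoidHom)
      have hsum : GJ.vec x = ∑ i, b₀.repr xx i • u i := by
        calc GJ.vec x = ψ xx := rfl
        _ = ψ (∑ i, b₀.repr xx i • b₀ i) := by rw [b₀.sum_repr]
        _ = ∑ i, b₀.repr xx i • u i := by
            rw [map_sum]
            exact Finset.sum_congr rfl fun i _ => map_zsmul ψ _ _
      rw [hsum]
      have hcentrals : ∀ p ∈ (List.ofFn fun i => g i ^ (b₀.repr xx i : ℤ)),
          p ∈ Subgroup.center (GJ d J) := by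
        intro p hp
        rw [List.mem_ofFn] at hp
        obtain ⟨i, rfl⟩ := hp
        exact Subgroup.zpow_mem _ (hcen (hgN i)) _
      rw [GJ.vec_list_prod _ hcentrals, List.map_ofFn, List.sum_ofFn]
      refine Finset.sum_congr rfl fun i _ => ?_
      show (b₀.repr xx i : ℤ) • u i = GJ.vec (g i ^ (b₀.repr xx i : ℤ))
      rw [GJ.vec_zpow_central (hcen (hgN i))]; rfl
    · rintro ⟨m, rfl⟩
      refine Subgroup.list_prod_mem N ?_
      intro p hp
      rw [List.mem_ofFn] at hp
      obtain ⟨i, rfl⟩ := hp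
      exact N.zpow_mem (hgN i) _
end
end

section
/- Let J be a nonzero real d×d matrix and G(J) the topological group with underlying space ℝ^d × ℝ and multiplication (v,t)·(u,s) = (v + exp(t·J)·u, t+s), and let N, M be discrete normal subgroups of G(J), with quotient maps q_N : G(J) → G(J)/N and q_M : G(J) → G(J)/M (quotient topology). Then: (a) for every topological group automorphism Φ of G(J) with Φ(N) = M, there is a well-defined topological group isomorphism Φ_{N,M} : G(J)/N → G(J)/M satisfying Φ_{N,M} ∘ q_N = q_M ∘ Φ; and (b) every topological group isomorphism Ψ : G(J)/N → G(J)/M arises in this way from a unique topological group automorphism Φ of G(J) with Φ(N) = M. -/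
open scoped Matrix
open NormedSpace

noncomputable section

namespace GJ
variable {d : ℕ} {J : Matrix (Fin d) (Fin d) ℝ}

def pi (g : GJ d J) : (Fin d → ℝ) × ℝ := (g.v, g.t)

lemma isInducing_pi : Topology.IsInducing (pi : GJ d J → _) := ⟨rfl⟩

def coordHomeo : GJ d J ≃ₜ (Fin d → ℝ) × ℝ :=
  Equiv.toHomeomorphOfIsInducing ⟨pi, fun p => ⟨p.1, p.2⟩, fun _ => rfl, fun _ => rfl⟩ isInducing_pi

instance : T2Space (GJ d J) := coordHomeo.symm.t2Space
instance : ConnectedSpace (GJ d J) := coordHomeo.symm.surjective.connectedSpace coordHomeo.symm.continuous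

lemma continuous_vt : Continuous (fun g : GJ d J => (g.v, g.t)) := isInducing_pi.continuous

lemma continuous_expJ : Continuous fun t : ℝ => exp (t • J) := by
  letI : SeminormedRing (Matrix (Fin d) (Fin d) ℝ) := Matrix.linftyOpSemiNormedRing
  letI : NormedRing (Matrix (Fin d) (Fin d) ℝ) := Matrix.linftyOpNormedRing
  letI : NormedAlgebra ℝ (Matrix (Fin d) (Fin d) ℝ) := Matrix.linftyOpNormedAlgebra
  letI : NormedAlgebra ℚ (Matrix (Fin d) (Fin d) ℝ) :=
    { (inferInstance : Algebra ℚ (Matrix (Fin d) (Fin d) ℝ)) with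
      norm_smul_le := fun q A => by
        rw [← Rat.cast_smul_eq_qsmul ℝ]
        exact (norm_smul_le (q : ℝ) A).trans_eq (by rw [Rat.norm_cast_real]) }
  exact exp_continuous.comp (continuous_id.smul continuous_const)

lemma continuous_mulVec : Continuous fun p : Matrix (Fin d) (Fin d) ℝ × (Fin d → ℝ) => p.1.mulVec p.2 := by
  apply continuous_pi; intro i
  simp only [Matrix.mulVec, dotProduct]
  exact continuous_finset_sum _ fun j _ =>
    ((continuous_apply_apply i j).comp continuous_fst).mul ((continuous_apply j).comp continuous_snd)

lemma continuous_t : Continuous (GJ.t : GJ d J → ℝ) := continuous_snd.comp continuous_vt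
lemma continuous_v : Continuous (GJ.v : GJ d J → Fin d → ℝ) := continuous_fst.comp continuous_vt

instance : IsTopologicalGroup (GJ d J) where
  continuous_mul := by
    rw [isInducing_pi.continuous_iff]
    have ht1 : Continuous fun p : GJ d J × GJ d J => p.1.t := continuous_t.comp continuous_fst
    have ht2 : Continuous fun p : GJ d J × GJ d J => p.2.t := continuous_t.comp continuous_snd
    have hv1 : Continuous fun p : GJ d J × GJ d J => p.1.v := continuous_v.comp continuous_fst
    have hv2 : Continuous fun p : GJ d J × GJ d J => p.2.v := continuous_v.comp continuous_snd
    exact (hv1.add (continuous_mulVec.comp ((continuous_expJ.comp ht1).prodMk hv2))).prodMk (ht1.add ht2)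
  continuous_inv := by
    rw [isInducing_pi.continuous_iff]
    exact ((continuous_mulVec.comp ((continuous_expJ.comp continuous_t.neg).prodMk continuous_v)).neg).prodMk continuous_t.neg

end GJ

section AbstractLift
set_option linter.unusedSectionVars false

variable {G : Type*} [Group G] [TopologicalSpace G] [IsTopologicalGroup G] [T2Space G]
variable {M : Subgroup G}

/-- From discreteness, an open set isolating `1` in `M`. -/
lemma exists_isolating_open (hM : DiscreteTopology M) :
    ∃ U : Set G, IsOpen U ∧ (1 : G) ∈ U ∧ U ∩ (M : Set G) = {1} := by
  have h1 : IsOpen ({⟨1, M.one_mem⟩} : Set M) := isOpen_discrete _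
  rw [isOpen_induced_iff] at h1
  obtain ⟨U, hU, hUe⟩ := h1
  refine ⟨U, hU, ?_, ?_⟩
  · have : (⟨1, M.one_mem⟩ : M) ∈ (Subtype.val ⁻¹' U : Set M) := by
      rw [hUe]; rfl
    exact this
  · ext x
    constructor
    · rintro ⟨hxU, hxM⟩
      have : (⟨x, hxM⟩ : M) ∈ (Subtype.val ⁻¹' U : Set M) := hxU
      rw [hUe] at this
      simpa using congrArg Subtype.val this
    · rintro rfl
      refine ⟨?_, M.one_mem⟩
      have : (⟨1, M.one_mem⟩ : M) ∈ (Subtype.val ⁻¹' U : Set M) := by rw [hUe]; rfl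
      exact this

/-- Rigidity: a continuous map into the discrete subgroup `M` on a preconnected set,
equal to `1` somewhere, is constantly `1`. -/
lemma rigidity (hM : DiscreteTopology M) {X : Type*} [TopologicalSpace X] {s : Set X}
    (hs : IsPreconnected s) {c : X → G} (hc : ContinuousOn c s)
    (hmem : ∀ x ∈ s, c x ∈ M) {x₀ : X} (hx₀ : x₀ ∈ s) (h1 : c x₀ = 1) :
    ∀ x ∈ s, c x = 1 := by
  obtain ⟨U, hUo, hU1, hUM⟩ := exists_isolating_open hM
  haveI := Subtype.preconnectedSpace hs
  set c' : s → G := fun x => c x with hc'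
  have hc'cont : Continuous c' := continuousOn_iff_continuous_restrict.mp hc
  have hkey : (c' ⁻¹' {1}) = Set.univ := by
    apply IsClopen.eq_univ
    · constructor
      · exact isClosed_singleton.preimage hc'cont
      · have heq : c' ⁻¹' {1} = c' ⁻¹' U := by
          ext x
          constructor
          · intro hx
            have hx1 : c' x = 1 := hx
            simpa [hx1] using hU1
          · intro hx
            have : c' x ∈ U ∩ (M : Set G) := ⟨hx, hmem x x.2⟩
            rw [hUM] at this; exact this
        rw [heq]
        exact hUo.preimage hc'cont
    · exact ⟨⟨x₀, hx₀⟩, h1⟩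
  intro x hx
  have : (⟨x, hx⟩ : s) ∈ c' ⁻¹' {1} := hkey ▸ Set.mem_univ _
  simpa using this

/-- A continuous local section of the quotient map near the identity. -/
lemma exists_local_section [M.Normal] (hM : DiscreteTopology M) :
    ∃ (Q : Set (G ⧸ M)) (σ : G ⧸ M → G), IsOpen Q ∧ (1 : G ⧸ M) ∈ Q ∧ ContinuousOn σ Q ∧
      (∀ y ∈ Q, ((σ y : G) : G ⧸ M) = y) ∧ σ 1 = 1 := by
  obtain ⟨U, hUo, hU1, hUM⟩ := exists_isolating_open hM
  -- find V open, 1 ∈ V, V ⊆ U, with a⁻¹ * b ∈ U for a b ∈ V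
  have hcont : Continuous fun p : G × G => p.1⁻¹ * p.2 := continuous_fst.inv.mul continuous_snd
  have hpre : IsOpen ((fun p : G × G => p.1⁻¹ * p.2) ⁻¹' U) := hUo.preimage hcont
  have h11 : ((1 : G), (1 : G)) ∈ (fun p : G × G => p.1⁻¹ * p.2) ⁻¹' U := by
    simpa using hU1
  obtain ⟨V₁, V₂, hV₁, hV₂, h1V₁, h1V₂, hVsub⟩ := isOpen_prod_iff.mp hpre 1 1 h11
  set V : Set G := V₁ ∩ V₂ ∩ U with hV
  have hVo : IsOpen V := (hV₁.inter hV₂).inter hUo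
  have h1V : (1 : G) ∈ V := ⟨⟨h1V₁, h1V₂⟩, hU1⟩
  have hVU : V ⊆ U := fun x hx => hx.2
  have hinj : ∀ a ∈ V, ∀ b ∈ V, (a : G ⧸ M) = (b : G ⧸ M) → a = b := by
    intro a ha b hb hab
    have hmem : a⁻¹ * b ∈ M := (QuotientGroup.eq).mp hab
    have hU' : a⁻¹ * b ∈ U := hVsub (Set.mk_mem_prod ha.1.1 hb.1.2)
    have : a⁻¹ * b ∈ U ∩ (M : Set G) := ⟨hU', hmem⟩
    rw [hUM] at this
    have : a⁻¹ * b = 1 := this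
    exact inv_mul_eq_one.mp this
  set q : G → G ⧸ M := QuotientGroup.mk with hq
  set Q : Set (G ⧸ M) := q '' V with hQ
  have hQo : IsOpen Q := QuotientGroup.isOpenMap_coe V hVo
  have h1Q : (1 : G ⧸ M) ∈ Q := ⟨1, h1V, rfl⟩
  classical
  set σ : G ⧸ M → G := fun y => if h : ∃ x ∈ V, q x = y then h.choose else 1 with hσ
  have hσspec : ∀ y ∈ Q, σ y ∈ V ∧ q (σ y) = y := by
    intro y hy
    obtain ⟨x, hxV, hxy⟩ := hy
    have hex : ∃ x ∈ V, q x = y := ⟨x, hxV, hxy⟩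
    simp only [hσ, dif_pos hex]
    exact ⟨hex.choose_spec.1, hex.choose_spec.2⟩
  have hσ1 : σ 1 = 1 := by
    have h := hσspec 1 h1Q
    have hm : σ 1 ∈ M := (QuotientGroup.eq_one_iff _).mp h.2
    have : σ 1 ∈ U ∩ (M : Set G) := ⟨hVU h.1, hm⟩
    rw [hUM] at this
    exact this
  refine ⟨Q, σ, hQo, h1Q, ?_, fun y hy => (hσspec y hy).2, hσ1⟩
  -- continuity of σ on Q
  intro y hy
  rw [ContinuousWithinAt, tendsto_nhds]
  intro W hWo hWσ
  have hyW : y ∈ q '' (W ∩ V) := ⟨σ y, ⟨hWσ, (hσspec y hy).1⟩, (hσspec y hy).2⟩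
  rw [mem_nhdsWithin]
  refine ⟨q '' (W ∩ V), QuotientGroup.isOpenMap_coe _ (hWo.inter hVo), hyW, ?_⟩
  rintro y' ⟨⟨x, ⟨hxW, hxV⟩, hxy⟩, hy'Q⟩
  have hs := hσspec y' hy'Q
  have : σ y' = x := hinj _ hs.1 _ hxV (by rw [hs.2, hxy])
  simpa [Set.mem_preimage, this] using hxW

/-- Lifting a continuous homomorphism from `ℝ` through the quotient by a discrete subgroup. -/
lemma lift_real [M.Normal] (hM : DiscreteTopology M) {f : ℝ → G ⧸ M}
    (hf : Continuous f) (hhom : ∀ s t : ℝ, f (s + t) = f s * f t) :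
    ∃ φ : ℝ → G, Continuous φ ∧ φ 0 = 1 ∧ ∀ t, ((φ t : G) : G ⧸ M) = f t := by
  classical
  obtain ⟨Q, σ, hQo, h1Q, hσc, hσsec, hσ1⟩ := exists_local_section hM
  have hf0 : f 0 = 1 := by
    have h := hhom 0 0
    rw [add_zero] at h
    have h' : f 0 * 1 = f 0 * f 0 := by rw [mul_one]; exact h
    exact (mul_left_cancel h').symm
  have hfpow : ∀ (n : ℕ) (s : ℝ), f s ^ n = f (n * s) := by
    intro n s
    induction n with
    | zero => simp [hf0]
    | succ n ih =>
        rw [pow_succ, ih, ← hhom]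
        push_cast
        ring_nf
  have hQn : f ⁻¹' Q ∈ nhds (0 : ℝ) := (hQo.preimage hf).mem_nhds (by simpa [hf0] using h1Q)
  obtain ⟨ε, hε, hball⟩ := Metric.mem_nhds_iff.mp hQn
  have hfQ : ∀ s : ℝ, |s| < ε → f s ∈ Q := fun s hs =>
    hball (by simpa [Real.dist_eq] using hs)
  set g : ℕ → ℝ → G := fun n t => σ (f (t / 2 ^ n)) ^ (2 ^ n : ℕ) with hg
  have hmemball : ∀ (n : ℕ) (t : ℝ), t ∈ Metric.ball (0 : ℝ) (2 ^ n * ε) ↔ |t| < 2 ^ n * ε := by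
    intro n t; simp [Real.dist_eq]
  have hsmall : ∀ (n : ℕ) (t : ℝ), |t| < 2 ^ n * ε → |t / 2 ^ n| < ε := by
    intro n t ht
    rw [abs_div, abs_of_pos (by positivity : (0:ℝ) < 2 ^ n), div_lt_iff₀ (by positivity : (0:ℝ) < 2 ^ n)]
    linarith [ht]
  have hgc : ∀ n : ℕ, ContinuousOn (g n) (Metric.ball (0 : ℝ) (2 ^ n * ε)) := by
    intro n
    apply ContinuousOn.pow
    apply hσc.comp (hf.comp (continuous_id.div_const _)).continuousOn
    intro t ht
    exact hfQ _ (hsmall n t ((hmemball n t).mp ht))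
  have hgq : ∀ (n : ℕ) (t : ℝ), |t| < 2 ^ n * ε → ((g n t : G) : G ⧸ M) = f t := by
    intro n t ht
    have h1 : ((σ (f (t / 2 ^ n)) : G) : G ⧸ M) = f (t / 2 ^ n) :=
      hσsec _ (hfQ _ (hsmall n t ht))
    calc ((g n t : G) : G ⧸ M) = ((σ (f (t / 2 ^ n)) : G) : G ⧸ M) ^ (2 ^ n : ℕ) := by
          rw [hg]; exact (QuotientGroup.mk_pow M _ _)
      _ = f (t / 2 ^ n) ^ (2 ^ n : ℕ) := by rw [h1]
      _ = f ((2 ^ n : ℕ) * (t / 2 ^ n)) := hfpow _ _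
      _ = f t := by
          congr 1
          push_cast
          field_simp
  have hstep : ∀ (n : ℕ) (t : ℝ), |t| < 2 ^ n * ε →
      σ (f (t / 2 ^ (n + 1))) ^ 2 = σ (f (t / 2 ^ n)) := by
    intro n t ht
    set c : ℝ → G := fun t => σ (f (t / 2 ^ (n + 1))) ^ 2 * (σ (f (t / 2 ^ n)))⁻¹ with hc
    have hcball : ∀ u ∈ Metric.ball (0 : ℝ) (2 ^ n * ε), c u = 1 := by
      apply rigidity hM (convex_ball (0:ℝ) _).isPreconnected
      · apply ContinuousOn.mul
        · apply ContinuousOn.pow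
          apply hσc.comp (hf.comp (continuous_id.div_const _)).continuousOn
          intro u hu
          apply hfQ
          have h2 : |u| < 2 ^ (n+1) * ε := by
            have := (hmemball n u).mp hu
            have h2n : (2:ℝ) ^ n * ε ≤ 2 ^ (n+1) * ε := by
              apply mul_le_mul_of_nonneg_right _ hε.le
              exact pow_le_pow_right₀ one_le_two (Nat.le_succ n)
            linarith
          exact hsmall (n+1) u h2
        · apply ContinuousOn.inv
          apply hσc.comp (hf.comp (continuous_id.div_const _)).continuousOn
          intro u hu
          exact hfQ _ (hsmall n u ((hmemball n u).mp hu))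
      · intro u hu
        rw [← QuotientGroup.eq_one_iff]
        have hu' := (hmemball n u).mp hu
        have hu2 : |u / 2 ^ (n+1)| < ε := by
          apply hsmall
          have h2n : (2:ℝ) ^ n * ε ≤ 2 ^ (n+1) * ε := by
            apply mul_le_mul_of_nonneg_right _ hε.le
            exact pow_le_pow_right₀ one_le_two (Nat.le_succ n)
          linarith
        have hs1 : ((σ (f (u / 2 ^ (n+1))) : G) : G ⧸ M) = f (u / 2 ^ (n+1)) :=
          hσsec _ (hfQ _ hu2)
        have hs2 : ((σ (f (u / 2 ^ n)) : G) : G ⧸ M) = f (u / 2 ^ n) :=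
          hσsec _ (hfQ _ (hsmall n u hu'))
        have hsq : f (u / 2 ^ (n+1)) ^ 2 = f (u / 2 ^ n) := by
          rw [hfpow 2 _]
          congr 1
          push_cast
          field_simp
          ring
        calc ((c u : G) : G ⧸ M)
            = ((σ (f (u / 2 ^ (n+1))) : G) : G ⧸ M) ^ 2 *
              (((σ (f (u / 2 ^ n)) : G) : G ⧸ M))⁻¹ := by
              rw [hc]
              simp
          _ = f (u / 2 ^ n) * (f (u / 2 ^ n))⁻¹ := by rw [hs1, hs2, hsq]
          _ = 1 := mul_inv_cancel _
      · exact Metric.mem_ball_self (by positivity)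
      · rw [hc]
        simp only [zero_div, hf0, hσ1, one_pow, inv_one, mul_one]
    have := hcball t ((hmemball n t).mpr ht)
    rw [hc] at this
    exact mul_inv_eq_one.mp this
  have hgm : ∀ (n m : ℕ), n ≤ m → ∀ t : ℝ, |t| < 2 ^ n * ε → g m t = g n t := by
    intro n m hnm
    induction m, hnm using Nat.le_induction with
    | base => intro t _; rfl
    | succ m hm ih =>
        intro t ht
        have htm : |t| < 2 ^ m * ε := by
          have h2n : (2:ℝ) ^ n * ε ≤ 2 ^ m * ε :=
            mul_le_mul_of_nonneg_right (pow_le_pow_right₀ one_le_two hm) hε.le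
          linarith
        have : g (m + 1) t = g m t := by
          show σ (f (t / 2 ^ (m+1))) ^ ((2:ℕ) ^ (m+1)) = σ (f (t / 2 ^ m)) ^ ((2:ℕ) ^ m)
          have hp : (2:ℕ) ^ (m+1) = 2 * 2 ^ m := by ring
          rw [hp, pow_mul, hstep m t htm]
        rw [this]
        exact ih t ht
  have hex : ∀ t : ℝ, ∃ n : ℕ, |t| < 2 ^ n * ε := by
    intro t
    obtain ⟨n, hn⟩ := pow_unbounded_of_one_lt (|t| / ε) (one_lt_two (α := ℝ))
    exact ⟨n, by rwa [div_lt_iff₀ hε] at hn⟩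
  set φ : ℝ → G := fun t => g (hex t).choose t with hφ
  have hφg : ∀ (n : ℕ) (t : ℝ), |t| < 2 ^ n * ε → φ t = g n t := by
    intro n t ht
    have hc := (hex t).choose_spec
    have h1 : g (max n (hex t).choose) t = g n t := hgm n _ (le_max_left _ _) t ht
    have h2 : g (max n (hex t).choose) t = g (hex t).choose t :=
      hgm _ _ (le_max_right _ _) t hc
    rw [hφ]
    simp only
    rw [← h2, h1]
  refine ⟨φ, ?_, ?_, ?_⟩
  · rw [continuous_iff_continuousAt]
    intro t₀
    obtain ⟨n, hn⟩ := hex t₀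
    have hb : Metric.ball (0 : ℝ) (2 ^ n * ε) ∈ nhds t₀ :=
      Metric.isOpen_ball.mem_nhds ((hmemball n t₀).mpr hn)
    have hgnc : ContinuousAt (g n) t₀ := (hgc n).continuousAt hb
    apply hgnc.congr
    apply Filter.eventuallyEq_of_mem hb
    intro t ht
    exact (hφg n t ((hmemball n t).mp ht)).symm
  · rw [hφg 0 0 (by simpa using hε)]
    show σ (f (0 / 2 ^ 0)) ^ ((2:ℕ) ^ 0) = 1
    simp [hf0, hσ1]
  · intro t
    obtain ⟨n, hn⟩ := hex t
    rw [hφg n t hn]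
    exact hgq n t hn

end AbstractLift

namespace GJ

variable {d : ℕ} {J : Matrix (Fin d) (Fin d) ℝ}

lemma prod_of_tzero (l : List (GJ d J)) (h : ∀ x ∈ l, x.t = 0) :
    l.prod = ⟨(l.map GJ.v).sum, 0⟩ := by
  induction l with
  | nil => rfl
  | cons a l ih =>
      rw [List.prod_cons, ih (fun x hx => h x (List.mem_cons_of_mem a hx)), mul_def]
      have ha : a.t = 0 := h a (List.mem_cons_self)
      rw [ha]
      ext i
      · show (a.v + (exp ((0:ℝ) • J)).mulVec _) i = _
        rw [zero_smul, exp_zero, Matrix.one_mulVec]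
        simp
      · show (0:ℝ) + 0 = 0
        rw [add_zero]

lemma continuous_single (i : Fin d) : Continuous fun s : ℝ => (Pi.single i s : Fin d → ℝ) := by
  apply continuous_pi
  intro j
  by_cases hji : j = i
  · subst hji; simpa using continuous_id'
  · simp only [Pi.single_apply, if_neg hji]
    exact continuous_const

/-- Lifting a continuous homomorphism from `G(J)` through the quotient by a discrete subgroup. -/
lemma lift_hom {M : Subgroup (GJ d J)} [M.Normal] (hM : DiscreteTopology M)
    (F : GJ d J →* (GJ d J) ⧸ M) (hF : Continuous F) :
    ∃ φ : GJ d J → GJ d J, Continuous φ ∧ φ 1 = 1 ∧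
      ∀ g, ((φ g : GJ d J) : (GJ d J) ⧸ M) = F g := by
  have hlineV : ∀ (i : Fin d) (s r : ℝ),
      (⟨Pi.single i (s + r), 0⟩ : GJ d J) = ⟨Pi.single i s, 0⟩ * ⟨Pi.single i r, 0⟩ := by
    intro i s r
    rw [mul_def]
    refine GJ.ext ?_ ?_
    · show Pi.single i (s + r) = Pi.single i s + (exp ((0:ℝ) • J)).mulVec (Pi.single i r)
      rw [zero_smul, exp_zero, Matrix.one_mulVec, Pi.single_add]
    · show (0:ℝ) = 0 + 0
      rw [add_zero]
  have hlines : ∀ i : Fin d, ∃ φi : ℝ → GJ d J, Continuous φi ∧ φi 0 = 1 ∧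
      ∀ s, ((φi s : GJ d J) : (GJ d J) ⧸ M) = F ⟨Pi.single i s, 0⟩ := by
    intro i
    apply lift_real hM (f := fun s => F ⟨Pi.single i s, 0⟩)
    · apply hF.comp
      rw [isInducing_pi.continuous_iff]
      exact (continuous_single i).prodMk continuous_const
    · intro s r
      rw [hlineV i s r, map_mul]
  choose φs hφsc hφs0 hφsq using hlines
  obtain ⟨φτ, hφτc, hφτ0, hφτq⟩ :=
    lift_real hM (f := fun s => F ⟨0, s⟩) (by
      apply hF.comp
      rw [isInducing_pi.continuous_iff]
      exact continuous_const.prodMk continuous_id) (by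
      intro s r
      rw [← map_mul]
      refine congrArg F ?_
      rw [mul_def]
      simp)
  refine ⟨fun g => (List.ofFn fun i => φs i (g.v i)).prod * φτ g.t, ?_, ?_, ?_⟩
  · apply Continuous.mul _ (hφτc.comp continuous_t)
    simp only [List.ofFn_eq_map]
    exact continuous_list_prod _ fun i _ =>
      (hφsc i).comp ((continuous_apply i).comp continuous_v)
  · show (List.ofFn fun i => φs i ((0 : Fin d → ℝ) i)).prod * φτ (0:ℝ) = 1
    simp [hφs0, hφτ0, List.ofFn_const]
  · intro g
    have hcoe : ∀ x : GJ d J, ((x : GJ d J) : (GJ d J) ⧸ M) = QuotientGroup.mk' M x :=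
      fun x => rfl
    rw [hcoe, map_mul, map_list_prod]
    have h1 : (List.ofFn fun i => φs i (g.v i)).map (QuotientGroup.mk' M)
        = List.ofFn fun i => F (⟨Pi.single i (g.v i), 0⟩ : GJ d J) := by
      rw [List.map_ofFn]
      congr 1
      funext i
      exact hφsq i (g.v i)
    rw [h1]
    have h2 : (List.ofFn fun i => F (⟨Pi.single i (g.v i), 0⟩ : GJ d J))
        = (List.ofFn fun i => (⟨Pi.single i (g.v i), 0⟩ : GJ d J)).map F := by
      rw [List.map_ofFn]; rfl
    rw [h2, ← map_list_prod]
    have h3 : (List.ofFn fun i => (⟨Pi.single i (g.v i), 0⟩ : GJ d J)).prod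
        = (⟨g.v, 0⟩ : GJ d J) := by
      rw [prod_of_tzero _ (by
        intro x hx
        rw [List.mem_ofFn] at hx
        obtain ⟨i, rfl⟩ := hx
        rfl)]
      congr 1
      rw [List.map_ofFn]
      show (List.ofFn fun i => Pi.single i (g.v i)).sum = g.v
      rw [List.sum_ofFn]
      exact Finset.univ_sum_single g.v
    rw [h3]
    have hφτq' : (QuotientGroup.mk (φτ g.t) : (GJ d J) ⧸ M) = F ⟨0, g.t⟩ := hφτq g.t
    show F ⟨g.v, 0⟩ * QuotientGroup.mk (φτ g.t) = F g
    rw [hφτq', ← map_mul]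
    refine congrArg F ?_
    rw [mul_def]
    simp

end GJ

/-- Isomorphisms between quotients of `G(J)` by discrete normal subgroups: every automorphism
`Φ` of `G(J)` with `Φ(N) = M` descends to a topological group isomorphism
`G(J)/N → G(J)/M`, and every topological group isomorphism `G(J)/N → G(J)/M` arises this way
from a unique such automorphism. -/
theorem GJ.quotient_iso_iff_automorphism (d : ℕ) (J : Matrix (Fin d) (Fin d) ℝ) (hJ : J ≠ 0)
    (N M : Subgroup (GJ d J)) [N.Normal] [M.Normal]
    (hdN : DiscreteTopology N) (hdM : DiscreteTopology M) :
    (∀ Φ : GJ d J ≃* GJ d J, Continuous Φ → Continuous Φ.symm →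
      Φ '' (N : Set (GJ d J)) = (M : Set (GJ d J)) →
      ∃ Ψ : (GJ d J ⧸ N) ≃* (GJ d J ⧸ M), Continuous Ψ ∧ Continuous Ψ.symm ∧
        ∀ g : GJ d J, Ψ (QuotientGroup.mk' N g) = QuotientGroup.mk' M (Φ g)) ∧
    (∀ Ψ : (GJ d J ⧸ N) ≃* (GJ d J ⧸ M), Continuous Ψ → Continuous Ψ.symm →
      ∃! Φ : GJ d J ≃* GJ d J, Continuous Φ ∧ Continuous Φ.symm ∧
        Φ '' (N : Set (GJ d J)) = (M : Set (GJ d J)) ∧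
        ∀ g : GJ d J, Ψ (QuotientGroup.mk' N g) = QuotientGroup.mk' M (Φ g)) := by
  constructor
  · -- part (a)
    intro Φ hΦc hΦc' hΦN
    have hmap : Subgroup.map Φ.toMonoidHom N = M := by
      apply SetLike.ext'
      rw [Subgroup.coe_map]
      exact hΦN
    set Ψ : (GJ d J ⧸ N) ≃* (GJ d J ⧸ M) := QuotientGroup.congr N M Φ hmap with hΨ
    have hΨmk : ∀ g : GJ d J, Ψ (QuotientGroup.mk g) = QuotientGroup.mk (Φ g) :=
      fun g => QuotientGroup.congr_mk N M Φ hmap g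
    have hΨmk' : ∀ x : GJ d J, Ψ.symm (QuotientGroup.mk x) = QuotientGroup.mk (Φ.symm x) := by
      intro x
      rw [MulEquiv.symm_apply_eq, hΨmk, MulEquiv.apply_symm_apply]
    refine ⟨Ψ, ?_, ?_, fun g => hΨmk g⟩
    · rw [(QuotientGroup.isQuotientMap_mk N).continuous_iff]
      have : (Ψ ∘ QuotientGroup.mk) = fun g : GJ d J => QuotientGroup.mk (Φ g) :=
        funext hΨmk
      rw [this]
      exact QuotientGroup.continuous_mk.comp hΦc
    · rw [(QuotientGroup.isQuotientMap_mk M).continuous_iff]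
      have : (Ψ.symm ∘ QuotientGroup.mk) = fun x : GJ d J => QuotientGroup.mk (Φ.symm x) :=
        funext hΨmk'
      rw [this]
      exact QuotientGroup.continuous_mk.comp hΦc'
  · -- part (b)
    intro Ψ hΨc hΨc'
    obtain ⟨φ, hφc, hφ1, hφq⟩ := GJ.lift_hom hdM
      (Ψ.toMonoidHom.comp (QuotientGroup.mk' N)) (hΨc.comp QuotientGroup.continuous_mk)
    obtain ⟨φ', hφ'c, hφ'1, hφ'q⟩ := GJ.lift_hom hdN
      (Ψ.symm.toMonoidHom.comp (QuotientGroup.mk' M)) (hΨc'.comp QuotientGroup.continuous_mk)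
    have hφq' : ∀ g : GJ d J, (QuotientGroup.mk (φ g) : GJ d J ⧸ M)
        = Ψ (QuotientGroup.mk g) := fun g => hφq g
    have hφ'q' : ∀ g : GJ d J, (QuotientGroup.mk (φ' g) : GJ d J ⧸ N)
        = Ψ.symm (QuotientGroup.mk g) := fun g => hφ'q g
    -- φ ∘ φ' = id
    have hcomp1 : ∀ g : GJ d J, φ (φ' g) = g := by
      intro g
      have h := rigidity hdM isPreconnected_univ
        (c := fun g : GJ d J => φ (φ' g) * g⁻¹)
        (((hφc.comp hφ'c).mul continuous_inv).continuousOn)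
        (fun x _ => by
          rw [← QuotientGroup.eq_one_iff (N := M)]
          rw [QuotientGroup.mk_mul, QuotientGroup.mk_inv, hφq', hφ'q',
            MulEquiv.apply_symm_apply, mul_inv_cancel])
        (Set.mem_univ (1 : GJ d J))
        (by simp only [hφ'1, hφ1, inv_one, mul_one])
      exact mul_inv_eq_one.mp (h g (Set.mem_univ g))
    have hcomp2 : ∀ g : GJ d J, φ' (φ g) = g := by
      intro g
      have h := rigidity hdN isPreconnected_univ
        (c := fun g : GJ d J => φ' (φ g) * g⁻¹)
        (((hφ'c.comp hφc).mul continuous_inv).continuousOn)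
        (fun x _ => by
          rw [← QuotientGroup.eq_one_iff (N := N)]
          rw [QuotientGroup.mk_mul, QuotientGroup.mk_inv, hφ'q', hφq',
            MulEquiv.symm_apply_apply, mul_inv_cancel])
        (Set.mem_univ (1 : GJ d J))
        (by simp only [hφ1, hφ'1, inv_one, mul_one])
      exact mul_inv_eq_one.mp (h g (Set.mem_univ g))
    have hhom : ∀ a b : GJ d J, φ (a * b) = φ a * φ b := by
      intro a b
      have h := rigidity hdM isPreconnected_univ
        (c := fun p : GJ d J × GJ d J => φ (p.1 * p.2) * (φ p.1 * φ p.2)⁻¹)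
        (((hφc.comp continuous_mul).mul
          ((hφc.comp continuous_fst).mul (hφc.comp continuous_snd)).inv).continuousOn)
        (fun p _ => by
          rw [← QuotientGroup.eq_one_iff (N := M)]
          rw [QuotientGroup.mk_mul, QuotientGroup.mk_inv, QuotientGroup.mk_mul,
            hφq', hφq', hφq', QuotientGroup.mk_mul, map_mul, mul_inv_cancel])
        (Set.mem_univ ((1 : GJ d J), (1 : GJ d J)))
        (by simp only [mul_one, hφ1, inv_one])
      exact mul_inv_eq_one.mp (h (a, b) (Set.mem_univ _))
    set Φ : GJ d J ≃* GJ d J :=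
      { toFun := φ, invFun := φ', left_inv := hcomp2, right_inv := hcomp1,
        map_mul' := hhom } with hΦdef
    have hΦimg : Φ '' (N : Set (GJ d J)) = (M : Set (GJ d J)) := by
      apply Set.Subset.antisymm
      · rintro _ ⟨n, hn, rfl⟩
        show φ n ∈ M
        rw [← QuotientGroup.eq_one_iff (N := M), hφq',
          (QuotientGroup.eq_one_iff n).mpr hn, map_one]
      · intro m hm
        refine ⟨φ' m, ?_, hcomp1 m⟩
        show φ' m ∈ N
        rw [← QuotientGroup.eq_one_iff (N := N), hφ'q',
          (QuotientGroup.eq_one_iff m).mpr hm, map_one]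
    refine ⟨Φ, ⟨hφc, hφ'c, hΦimg, fun g => (hφq' g).symm⟩, ?_⟩
    intro Φ₂ ⟨h2c, h2c', h2img, h2q⟩
    have h := rigidity hdM isPreconnected_univ
      (c := fun x : GJ d J => Φ₂ x * (φ x)⁻¹)
      ((h2c.mul hφc.inv).continuousOn)
      (fun x _ => by
        rw [← QuotientGroup.eq_one_iff (N := M)]
        have h2 : Ψ (QuotientGroup.mk x) = QuotientGroup.mk (Φ₂ x) := h2q x
        rw [QuotientGroup.mk_mul, QuotientGroup.mk_inv, hφq', ← h2, mul_inv_cancel])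
      (Set.mem_univ (1 : GJ d J))
      (by simp only [map_one, hφ1, inv_one, mul_one])
    refine MulEquiv.ext fun x => ?_
    exact mul_inv_eq_one.mp (h x (Set.mem_univ x))
end
end

section
/- Let J be a real d×d matrix and G(J) the group with underlying set ℝ^d × ℝ and multiplication (v,t)·(u,s) = (v + exp(t·J)·u, t+s). Then: (a) for every (u,s) ∈ G(J), conjugation by (u,s) is given by (u,s)·(v,t)·(u,s)⁻¹ = (exp(s·J)·v − (exp(t·J) − 1)·u, t) for all (v,t); equivalently it is the map (v,t) ↦ (t·S(t·J)·γ + Δ·v, t) with Δ = exp(s·J) and γ = −J·u, where S(A) = Σ_{n≥0} Aⁿ/(n+1)!; and (b) conversely, for every s ∈ ℝ and every γ in the range of J, the map (v,t) ↦ (t·S(t·J)·γ + exp(s·J)·v, t) is conjugation by some element of G(J). Hence the inner automorphisms of G(J) are exactly the maps (v,t) ↦ (t·S(t·J)·γ + Δ·v, t) with Δ = exp(s·J) for some s ∈ ℝ and γ in the range of J. -/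
open scoped Matrix
open NormedSpace

noncomputable section

set_option maxHeartbeats 1000000 in
lemma matS_summable {d : ℕ} (A : Matrix (Fin d) (Fin d) ℝ) :
    Summable fun n : ℕ => (((n + 1).factorial : ℝ))⁻¹ • A ^ n := by
  letI : SeminormedRing (Matrix (Fin d) (Fin d) ℝ) := Matrix.linftyOpSemiNormedRing
  letI : NormedRing (Matrix (Fin d) (Fin d) ℝ) := Matrix.linftyOpNormedRing
  letI : NormedAlgebra ℝ (Matrix (Fin d) (Fin d) ℝ) := Matrix.linftyOpNormedAlgebra
  have h := NormedSpace.norm_expSeries_summable' (𝕂 := ℝ) A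
  have key : Summable fun n : ℕ => (((n + 1).factorial : ℝ))⁻¹ • A ^ n := by
    apply Summable.of_norm_bounded h
    intro n
    rw [norm_smul, norm_smul]
    apply mul_le_mul_of_nonneg_right _ (norm_nonneg _)
    rw [Real.norm_eq_abs, Real.norm_eq_abs, abs_of_nonneg (by positivity),
      abs_of_nonneg (by positivity)]
    apply inv_anti₀ (by positivity)
    exact_mod_cast Nat.factorial_le (Nat.le_succ n)
  exact key

set_option maxHeartbeats 1000000 in
lemma mul_matS {d : ℕ} (A : Matrix (Fin d) (Fin d) ℝ) : A * matS A = exp A - 1 := by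
  letI : SeminormedRing (Matrix (Fin d) (Fin d) ℝ) := Matrix.linftyOpSemiNormedRing
  letI : NormedRing (Matrix (Fin d) (Fin d) ℝ) := Matrix.linftyOpNormedRing
  letI : NormedAlgebra ℝ (Matrix (Fin d) (Fin d) ℝ) := Matrix.linftyOpNormedAlgebra
  have hf := NormedSpace.expSeries_summable' (𝕂 := ℝ) A
  have hg : Summable fun n : ℕ => (((n + 1).factorial : ℝ))⁻¹ • A ^ n := matS_summable A
  have key : A * (∑' n : ℕ, (((n + 1).factorial : ℝ))⁻¹ • A ^ n) = exp A - 1 := by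
    rw [← hg.tsum_mul_left A]
    have e1 : ∀ n : ℕ, A * ((((n + 1).factorial : ℝ))⁻¹ • A ^ n)
        = ((n+1).factorial : ℝ)⁻¹ • A ^ (n+1) := by
      intro n; rw [mul_smul_comm, pow_succ']
    rw [tsum_congr e1, NormedSpace.exp_eq_tsum ℝ]
    beta_reduce
    erw [hf.tsum_eq_zero_add]
    simp
    rfl
  exact key

set_option maxHeartbeats 1000000 in
lemma matS_mul {d : ℕ} (A : Matrix (Fin d) (Fin d) ℝ) : matS A * A = exp A - 1 := by
  letI : SeminormedRing (Matrix (Fin d) (Fin d) ℝ) := Matrix.linftyOpSemiNormedRing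
  letI : NormedRing (Matrix (Fin d) (Fin d) ℝ) := Matrix.linftyOpNormedRing
  letI : NormedAlgebra ℝ (Matrix (Fin d) (Fin d) ℝ) := Matrix.linftyOpNormedAlgebra
  have hg : Summable fun n : ℕ => (((n + 1).factorial : ℝ))⁻¹ • A ^ n := matS_summable A
  have key : (∑' n : ℕ, (((n + 1).factorial : ℝ))⁻¹ • A ^ n) * A
      = A * (∑' n : ℕ, (((n + 1).factorial : ℝ))⁻¹ • A ^ n) := by
    rw [← hg.tsum_mul_right A, ← hg.tsum_mul_left A]
    apply tsum_congr
    intro n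
    rw [smul_mul_assoc, mul_smul_comm, ← pow_succ, ← pow_succ']
  show matS A * A = _
  rw [matS] at *
  rw [key]
  exact mul_matS A

/-- `t • S(tJ) (-Ju) = -(exp(tJ) - 1) u`. -/
lemma matS_key {d : ℕ} (J : Matrix (Fin d) (Fin d) ℝ) (t : ℝ) (u : Fin d → ℝ) :
    t • (matS (t • J)).mulVec (-(J.mulVec u)) = -((exp (t • J) - 1).mulVec u) := by
  rw [Matrix.mulVec_neg, smul_neg, neg_inj, ← matS_mul (t • J), ← Matrix.mulVec_mulVec,
    Matrix.smul_mulVec, Matrix.mulVec_smul]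

/-- Inverse in `GJ` is definitionally this. -/
lemma GJ_inv_def {d : ℕ} {J : Matrix (Fin d) (Fin d) ℝ} (p : GJ d J) :
    p⁻¹ = ⟨-(exp ((-p.t) • J)).mulVec p.v, -p.t⟩ := rfl

lemma GJ_conj {d : ℕ} {J : Matrix (Fin d) (Fin d) ℝ} (u : Fin d → ℝ) (s : ℝ)
    (v : Fin d → ℝ) (t : ℝ) :
    (⟨u, s⟩ : GJ d J) * ⟨v, t⟩ * (⟨u, s⟩ : GJ d J)⁻¹ =
      ⟨(exp (s • J)).mulVec v - (exp (t • J) - 1).mulVec u, t⟩ := by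
  rw [GJ.mul_def, GJ_inv_def, GJ.mul_def]
  ext i
  · show (u + (exp (s • J)).mulVec v
      + (exp ((s + t) • J)).mulVec (-(exp ((-s) • J)).mulVec u)) i = _
    have h1 : exp ((s + t) • J) * exp ((-s) • J) = exp (t • J) := by
      rw [← GJ.exp_smul_add]
      ring_nf
    rw [Matrix.mulVec_neg, Matrix.mulVec_mulVec, h1, Matrix.sub_mulVec,
      Matrix.one_mulVec]
    simp only [Pi.add_apply, Pi.sub_apply, Pi.neg_apply]
    ring
  · show s + t + -s = t
    ring

lemma GJ_conj' {d : ℕ} {J : Matrix (Fin d) (Fin d) ℝ} (u : Fin d → ℝ) (s : ℝ)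
    (v : Fin d → ℝ) (t : ℝ) :
    (⟨u, s⟩ : GJ d J) * ⟨v, t⟩ * (⟨u, s⟩ : GJ d J)⁻¹ =
      ⟨t • (matS (t • J)).mulVec (-(J.mulVec u)) + (exp (s • J)).mulVec v, t⟩ := by
  rw [GJ_conj, matS_key]
  congr 1
  rw [sub_eq_add_neg, add_comm]

/-- Inner automorphisms of `G(J)`: conjugation by `(u,s)` is
`(v,t) ↦ (exp(sJ)v − (exp(tJ)−1)u, t) = (t·S(tJ)·γ + Δv, t)` with `Δ = exp(sJ)`, `γ = −Ju`;
conversely every such map with `γ ∈ range J` is a conjugation; hence the inner automorphisms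
are exactly the maps of this form. -/
theorem GJ.inner_automorphisms (d : ℕ) (J : Matrix (Fin d) (Fin d) ℝ) :
    (∀ (u : Fin d → ℝ) (s : ℝ) (v : Fin d → ℝ) (t : ℝ),
      ((⟨u, s⟩ : GJ d J) * ⟨v, t⟩ * (⟨u, s⟩ : GJ d J)⁻¹ =
        ⟨(exp (s • J)).mulVec v - (exp (t • J) - 1).mulVec u, t⟩) ∧
      ((⟨u, s⟩ : GJ d J) * ⟨v, t⟩ * (⟨u, s⟩ : GJ d J)⁻¹ =
        ⟨t • (matS (t • J)).mulVec (-(J.mulVec u)) + (exp (s • J)).mulVec v, t⟩)) ∧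
    (∀ (s : ℝ), ∀ γ ∈ LinearMap.range J.mulVecLin, ∃ g : GJ d J, ∀ p : GJ d J,
      g * p * g⁻¹ =
        ⟨p.t • (matS (p.t • J)).mulVec γ + (exp (s • J)).mulVec p.v, p.t⟩) ∧
    ({f : GJ d J → GJ d J | ∃ g : GJ d J, f = fun p => g * p * g⁻¹} =
      {f : GJ d J → GJ d J | ∃ s : ℝ, ∃ γ ∈ LinearMap.range J.mulVecLin,
        f = fun p =>
          ⟨p.t • (matS (p.t • J)).mulVec γ + (exp (s • J)).mulVec p.v, p.t⟩}) := by
  refine ⟨fun u s v t => ⟨GJ_conj u s v t, GJ_conj' u s v t⟩, ?_, ?_⟩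
  · rintro s γ ⟨w, rfl⟩
    refine ⟨⟨-w, s⟩, fun p => ?_⟩
    have := GJ_conj' (J := J) (-w) s p.v p.t
    simp only [Matrix.mulVec_neg, neg_neg] at this
    simpa [Matrix.mulVecLin_apply] using this
  · ext f
    constructor
    · rintro ⟨g, rfl⟩
      refine ⟨g.t, -(J.mulVec g.v), ⟨-g.v, by simp [Matrix.mulVecLin_apply, Matrix.mulVec_neg]⟩, ?_⟩
      funext p
      have := GJ_conj' (J := J) g.v g.t p.v p.t
      simpa using this
    · rintro ⟨s, γ, ⟨w, rfl⟩, rfl⟩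
      refine ⟨⟨-w, s⟩, funext fun p => ?_⟩
      have := GJ_conj' (J := J) (-w) s p.v p.t
      simp only [Matrix.mulVec_neg, neg_neg] at this
      simpa [Matrix.mulVecLin_apply] using this.symm
end
end

section
/- Let X, Y, Z be complex n×n matrices such that X·Y − Y·X = Z, X·Z = Z·X, Y·Z = Z·Y, and Z is anti-Hermitian (the conjugate transpose of Z equals −Z). Then Z = 0. -/
open scoped Matrix

lemma trace_conjTranspose_mul_self_eq_zero' {n : ℕ} (Z : Matrix (Fin n) (Fin n) ℂ)
    (h : Matrix.trace (Zᴴ * Z) = 0) : Z = 0 := by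
  have h' : ∑ i, ∑ j, (Complex.normSq (Z j i) : ℂ) = 0 := by
    rw [← h, Matrix.trace]
    simp [Matrix.diag, Matrix.mul_apply, Matrix.conjTranspose_apply, mul_comm,
      Complex.mul_conj]
  have h'' : ∑ i, ∑ j, Complex.normSq (Z j i) = 0 := by
    exact_mod_cast h' ▸ (by push_cast [← h']; ring_nf : (↑(∑ i, ∑ j, Complex.normSq (Z j i)) : ℂ) = ∑ i, ∑ j, (Complex.normSq (Z j i) : ℂ))
  ext i j
  have := Finset.sum_eq_zero_iff_of_nonneg (fun i _ => Finset.sum_nonneg fun j _ => Complex.normSq_nonneg _) |>.mp h''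
  have := Finset.sum_eq_zero_iff_of_nonneg (fun j _ => Complex.normSq_nonneg _) |>.mp (this j (Finset.mem_univ _))
  simpa using Complex.normSq_eq_zero.mp (this i (Finset.mem_univ _))

/-- If `[X,Y] = Z`, `Z` commutes with `X` and `Y`, and `Z` is anti-Hermitian, then `Z = 0`. -/
theorem antiHermitian_commutator_eq_zero (n : ℕ) (X Y Z : Matrix (Fin n) (Fin n) ℂ)
    (h1 : X * Y - Y * X = Z) (h2 : X * Z = Z * X) (h3 : Y * Z = Z * Y)
    (h4 : Zᴴ = -Z) : Z = 0 := by
  have htr : Matrix.trace (Z * Z) = 0 := by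
    calc Matrix.trace (Z * Z) = Matrix.trace (Z * (X * Y) - Z * (Y * X)) := by
          rw [← mul_sub, h1]
      _ = Matrix.trace (X * (Z * Y)) - Matrix.trace (Z * (Y * X)) := by
          rw [Matrix.trace_sub]; congr 1; rw [← mul_assoc, ← h2, mul_assoc]
      _ = 0 := by rw [Matrix.trace_mul_comm, mul_assoc, sub_self]
  apply trace_conjTranspose_mul_self_eq_zero'
  rw [h4, Matrix.neg_mul, Matrix.trace_neg, htr, neg_zero]
end

section
/- Let J be a real d×d matrix and G(J) the topological group with underlying space ℝ^d × ℝ and multiplication (v,t)·(u,s) = (v + exp(t·J)·u, t+s). Let W ⊆ ℝ^d be a linear subspace with J·W ⊆ W and let v₀ ∈ ℝ^d. Then the set H = {(w + t·S(t·J)·v₀, t) : w ∈ W, t ∈ ℝ}, where S(A) = Σ_{n≥0} Aⁿ/(n+1)!, is a subgroup of G(J), and H is a closed subset of ℝ^d × ℝ. -/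
open scoped Matrix
open NormedSpace

noncomputable section

namespace GJaux

open Matrix NormedSpace

variable {d : ℕ}

/-- The series defining `matS` converges (and sums to `matS A`). -/
lemma hasSum_matS (A : Matrix (Fin d) (Fin d) ℝ) :
    HasSum (fun n : ℕ => (((n + 1).factorial : ℝ))⁻¹ • A ^ n) (matS A) := by
  letI : SeminormedRing (Matrix (Fin d) (Fin d) ℝ) := Matrix.linftyOpSemiNormedRing
  letI : NormedRing (Matrix (Fin d) (Fin d) ℝ) := Matrix.linftyOpNormedRing
  letI : NormedAlgebra ℝ (Matrix (Fin d) (Fin d) ℝ) := Matrix.linftyOpNormedAlgebra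
  have hsum : Summable fun n : ℕ => (((n + 1).factorial : ℝ))⁻¹ • A ^ n := by
    refine Summable.of_norm_bounded (norm_expSeries_summable' (𝕂 := ℝ) A) fun n => ?_
    rw [norm_smul, norm_smul]
    refine mul_le_mul_of_nonneg_right ?_ (norm_nonneg _)
    rw [norm_inv, norm_inv, Real.norm_natCast, Real.norm_natCast]
    refine inv_anti₀ (by positivity) ?_
    exact_mod_cast Nat.factorial_le (Nat.le_succ n)
  simpa [matS] using hsum.hasSum

/-- `HasSum` can be assembled blockwise for `fromBlocks`. -/
lemma hasSum_fromBlocks {X l m n o : Type*} {f : X → Matrix n l ℝ} {g : X → Matrix n m ℝ}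
    {h : X → Matrix o l ℝ} {k : X → Matrix o m ℝ} {A : Matrix n l ℝ} {B : Matrix n m ℝ}
    {C : Matrix o l ℝ} {D : Matrix o m ℝ} (hA : HasSum f A) (hB : HasSum g B)
    (hC : HasSum h C) (hD : HasSum k D) :
    HasSum (fun x => Matrix.fromBlocks (f x) (g x) (h x) (k x)) (Matrix.fromBlocks A B C D) := by
  have key : ∀ (Y₁ : Matrix n l ℝ) (Y₂ : Matrix n m ℝ) (Y₃ : Matrix o l ℝ) (Y₄ : Matrix o m ℝ),
      Matrix.fromBlocks Y₁ Y₂ Y₃ Y₄ =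
        Matrix.fromBlocks Y₁ 0 0 0 + Matrix.fromBlocks 0 Y₂ 0 0 + Matrix.fromBlocks 0 0 Y₃ 0 +
          Matrix.fromBlocks 0 0 0 Y₄ := by
    intro Y₁ Y₂ Y₃ Y₄
    rw [Matrix.fromBlocks_add, Matrix.fromBlocks_add, Matrix.fromBlocks_add]
    simp
  have h₁ := hA.map (AddMonoidHom.mk' (fun Y : Matrix n l ℝ =>
      (Matrix.fromBlocks Y 0 0 0 : Matrix (n ⊕ o) (l ⊕ m) ℝ)) fun Y Z => by
        rw [Matrix.fromBlocks_add]; simp)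
    (Continuous.matrix_fromBlocks continuous_id continuous_const continuous_const continuous_const)
  have h₂ := hB.map (AddMonoidHom.mk' (fun Y : Matrix n m ℝ =>
      (Matrix.fromBlocks 0 Y 0 0 : Matrix (n ⊕ o) (l ⊕ m) ℝ)) fun Y Z => by
        rw [Matrix.fromBlocks_add]; simp)
    (Continuous.matrix_fromBlocks continuous_const continuous_id continuous_const continuous_const)
  have h₃ := hC.map (AddMonoidHom.mk' (fun Y : Matrix o l ℝ =>
      (Matrix.fromBlocks 0 0 Y 0 : Matrix (n ⊕ o) (l ⊕ m) ℝ)) fun Y Z => by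
        rw [Matrix.fromBlocks_add]; simp)
    (Continuous.matrix_fromBlocks continuous_const continuous_const continuous_id continuous_const)
  have h₄ := hD.map (AddMonoidHom.mk' (fun Y : Matrix o m ℝ =>
      (Matrix.fromBlocks 0 0 0 Y : Matrix (n ⊕ o) (l ⊕ m) ℝ)) fun Y Z => by
        rw [Matrix.fromBlocks_add]; simp)
    (Continuous.matrix_fromBlocks continuous_const continuous_const continuous_const continuous_id)
  have := ((h₁.add h₂).add h₃).add h₄
  simp only [Function.comp] at this
  convert this using 1
  · funext x
    exact key _ _ _ _
  · exact key _ _ _ _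

lemma fromBlocks_pow_succ {n m : Type*} [Fintype n] [DecidableEq n] [Fintype m] [DecidableEq m]
    (A : Matrix n n ℝ) (B : Matrix n m ℝ) (k : ℕ) :
    (Matrix.fromBlocks A B 0 0 : Matrix (n ⊕ m) (n ⊕ m) ℝ) ^ (k + 1) =
      Matrix.fromBlocks (A ^ (k + 1)) (A ^ k * B) 0 0 := by
  induction k with
  | zero => simp
  | succ k ih =>
    rw [pow_succ, ih, Matrix.fromBlocks_multiply, ← pow_succ]
    simp

/-- Coefficient sequence for the top-right block. -/
def cSeq (A : Matrix (Fin d) (Fin d) ℝ) (B : Matrix (Fin d) Unit ℝ) : ℕ → Matrix (Fin d) Unit ℝ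
  | 0 => 0
  | (k + 1) => (((k + 1).factorial : ℝ))⁻¹ • (A ^ k * B)

@[simp] lemma cSeq_zero (A : Matrix (Fin d) (Fin d) ℝ) (B : Matrix (Fin d) Unit ℝ) :
    cSeq A B 0 = 0 := rfl

@[simp] lemma cSeq_succ (A : Matrix (Fin d) (Fin d) ℝ) (B : Matrix (Fin d) Unit ℝ) (k : ℕ) :
    cSeq A B (k + 1) = (((k + 1).factorial : ℝ))⁻¹ • (A ^ k * B) := rfl

/-- Exponential of an upper block triangular matrix with zero bottom row. -/
lemma exp_fromBlocks (A : Matrix (Fin d) (Fin d) ℝ) (B : Matrix (Fin d) Unit ℝ) :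
    exp (Matrix.fromBlocks A B 0 0 : Matrix (Fin d ⊕ Unit) (Fin d ⊕ Unit) ℝ) =
      Matrix.fromBlocks (exp A) (matS A * B) 0 1 := by
  letI : SeminormedRing (Matrix (Fin d ⊕ Unit) (Fin d ⊕ Unit) ℝ) := Matrix.linftyOpSemiNormedRing
  letI : NormedRing (Matrix (Fin d ⊕ Unit) (Fin d ⊕ Unit) ℝ) := Matrix.linftyOpNormedRing
  letI : NormedAlgebra ℝ (Matrix (Fin d ⊕ Unit) (Fin d ⊕ Unit) ℝ) := Matrix.linftyOpNormedAlgebra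
  letI : SeminormedRing (Matrix (Fin d) (Fin d) ℝ) := Matrix.linftyOpSemiNormedRing
  letI : NormedRing (Matrix (Fin d) (Fin d) ℝ) := Matrix.linftyOpNormedRing
  letI : NormedAlgebra ℝ (Matrix (Fin d) (Fin d) ℝ) := Matrix.linftyOpNormedAlgebra
  have hF : HasSum (fun n : ℕ => ((n.factorial : ℝ))⁻¹ • (Matrix.fromBlocks A B 0 0 :
      Matrix (Fin d ⊕ Unit) (Fin d ⊕ Unit) ℝ) ^ n) (exp (Matrix.fromBlocks A B 0 0)) :=
    exp_series_hasSum_exp' _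
  have h11 : HasSum (fun n : ℕ => ((n.factorial : ℝ))⁻¹ • A ^ n) (exp A) := exp_series_hasSum_exp' _
  have h12'' : HasSum (fun n : ℕ => cSeq A B (n + 1)) (matS A * B) := by
    have := (hasSum_matS A).map
      (AddMonoidHom.mk' (fun X : Matrix (Fin d) (Fin d) ℝ => X * B) fun X Y => Matrix.add_mul X Y B)
      (continuous_id.matrix_mul continuous_const)
    simpa [Function.comp_def, smul_mul_assoc] using this
  have h12 : HasSum (cSeq A B) (matS A * B) := by
    refine (hasSum_nat_add_iff' 1).mp ?_
    simpa using h12''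
  have h21 : HasSum (fun _ : ℕ => (0 : Matrix Unit (Fin d) ℝ)) 0 := hasSum_zero
  have h22 : HasSum (fun n : ℕ => if n = 0 then (1 : Matrix Unit Unit ℝ) else 0) 1 :=
    hasSum_ite_eq 0 1
  have hG := hasSum_fromBlocks h11 h12 h21 h22
  have heq : (fun n : ℕ => ((n.factorial : ℝ))⁻¹ • (Matrix.fromBlocks A B 0 0 :
      Matrix (Fin d ⊕ Unit) (Fin d ⊕ Unit) ℝ) ^ n) =
      fun n => Matrix.fromBlocks (((n.factorial : ℝ))⁻¹ • A ^ n) (cSeq A B n) 0 (if n = 0 then 1 else 0) := by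
    funext n
    cases n with
    | zero => simp [Matrix.fromBlocks_one]
    | succ k =>
      rw [fromBlocks_pow_succ, Matrix.fromBlocks_smul]
      simp
  rw [heq] at hF
  exact hF.unique hG

variable (J : Matrix (Fin d) (Fin d) ℝ) (v₀ : Fin d → ℝ)

/-- The augmented matrix `[[J, v₀],[0,0]]`. -/
def Mblk : Matrix (Fin d ⊕ Unit) (Fin d ⊕ Unit) ℝ :=
  Matrix.fromBlocks J (Matrix.replicateCol Unit v₀) 0 0

lemma exp_smul_Mblk (t : ℝ) :
    exp (t • Mblk J v₀) =
      Matrix.fromBlocks (exp (t • J))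
        (Matrix.replicateCol Unit (t • (matS (t • J)).mulVec v₀)) 0 1 := by
  have h1 : t • Mblk J v₀ = Matrix.fromBlocks (t • J) (Matrix.replicateCol Unit (t • v₀)) 0 0 := by
    rw [Mblk, Matrix.fromBlocks_smul, Matrix.replicateCol_smul]
    simp
  rw [h1, exp_fromBlocks]
  have h2 : matS (t • J) * Matrix.replicateCol Unit (t • v₀) =
      Matrix.replicateCol Unit (t • (matS (t • J)).mulVec v₀) := by
    rw [← Matrix.replicateCol_mulVec, Matrix.mulVec_smul]
  rw [h2]

lemma phi_add (t s : ℝ) :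
    (t + s) • (matS ((t + s) • J)).mulVec v₀ =
      t • (matS (t • J)).mulVec v₀ +
        (exp (t • J)).mulVec (s • (matS (s • J)).mulVec v₀) := by
  have hexp : exp ((t + s) • Mblk J v₀) = exp (t • Mblk J v₀) * exp (s • Mblk J v₀) := by
    rw [add_smul]
    exact Matrix.exp_add_of_commute _ _ (((Commute.refl (Mblk J v₀)).smul_left t).smul_right s)
  rw [exp_smul_Mblk, exp_smul_Mblk, exp_smul_Mblk, Matrix.fromBlocks_multiply] at hexp
  have h12 := congrArg Matrix.toBlocks₁₂ hexp
  simp only [Matrix.toBlocks_fromBlocks₁₂, Matrix.mul_zero, Matrix.zero_mul, add_zero, zero_add,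
    Matrix.mul_one] at h12
  rw [← Matrix.replicateCol_mulVec, ← Matrix.replicateCol_add] at h12
  funext i
  have := congrFun (congrFun h12 i) ()
  simpa [Matrix.replicateCol, add_comm] using this

lemma phi_zero : (0 : ℝ) • (matS ((0 : ℝ) • J)).mulVec v₀ = 0 := zero_smul _ _

lemma phi_neg (t : ℝ) :
    (-t) • (matS ((-t) • J)).mulVec v₀ =
      -(exp ((-t) • J)).mulVec (t • (matS (t • J)).mulVec v₀) := by
  have h := phi_add J v₀ (-t) t
  rw [neg_add_cancel, phi_zero] at h
  exact eq_neg_of_add_eq_zero_left h.symm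

lemma phi_cont : Continuous fun t : ℝ => t • (matS (t • J)).mulVec v₀ := by
  have h1 : Continuous fun t : ℝ => exp (t • Mblk J v₀) := by
    letI : SeminormedRing (Matrix (Fin d ⊕ Unit) (Fin d ⊕ Unit) ℝ) := Matrix.linftyOpSemiNormedRing
    letI : NormedRing (Matrix (Fin d ⊕ Unit) (Fin d ⊕ Unit) ℝ) := Matrix.linftyOpNormedRing
    letI : NormedAlgebra ℝ (Matrix (Fin d ⊕ Unit) (Fin d ⊕ Unit) ℝ) := Matrix.linftyOpNormedAlgebra
    letI : NormedAlgebra ℚ (Matrix (Fin d ⊕ Unit) (Fin d ⊕ Unit) ℝ) := NormedAlgebra.restrictScalars ℚ ℝ _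
    exact (exp_continuous).comp (continuous_id.smul continuous_const)
  refine continuous_pi fun i => ?_
  have h2 : (fun t : ℝ => (t • (matS (t • J)).mulVec v₀) i) =
      fun t : ℝ => exp (t • Mblk J v₀) (Sum.inl i) (Sum.inr ()) := by
    funext t
    rw [exp_smul_Mblk]
    rfl
  rw [h2]
  exact h1.matrix_elem _ _

lemma exp_mem (W : Submodule ℝ (Fin d → ℝ)) (hW : ∀ w ∈ W, J.mulVec w ∈ W) (t : ℝ) {w}
    (hw : w ∈ W) : (exp (t • J)).mulVec w ∈ W := by
  have hpow : ∀ n : ℕ, (J ^ n).mulVec w ∈ W := by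
    intro n
    induction n with
    | zero => simpa using hw
    | succ n ih =>
      rw [pow_succ', ← Matrix.mulVec_mulVec]
      exact hW _ ih
  letI : SeminormedRing (Matrix (Fin d) (Fin d) ℝ) := Matrix.linftyOpSemiNormedRing
  letI : NormedRing (Matrix (Fin d) (Fin d) ℝ) := Matrix.linftyOpNormedRing
  letI : NormedAlgebra ℝ (Matrix (Fin d) (Fin d) ℝ) := Matrix.linftyOpNormedAlgebra
  have h := (exp_series_hasSum_exp' (𝕂 := ℝ) (t • J)).map
    (AddMonoidHom.mk' (fun X : Matrix (Fin d) (Fin d) ℝ => X.mulVec w)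
      fun X Y => Matrix.add_mulVec X Y w)
    (continuous_id.matrix_mulVec continuous_const)
  have hcl : IsClosed (W : Set (Fin d → ℝ)) := Submodule.closed_of_finiteDimensional W
  refine hcl.mem_of_tendsto h.tendsto_sum_nat (Filter.Eventually.of_forall fun n => ?_)
  refine W.sum_mem fun k _ => ?_
  have hterm : (AddMonoidHom.mk' (fun X : Matrix (Fin d) (Fin d) ℝ => X.mulVec w)
      fun X Y => Matrix.add_mulVec X Y w) (((k.factorial : ℝ))⁻¹ • (t • J) ^ k) =
      (((k.factorial : ℝ))⁻¹ * t ^ k) • (J ^ k).mulVec w := by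
    simp only [AddMonoidHom.mk'_apply, smul_pow, smul_smul, Matrix.smul_mulVec]
  simp only [Function.comp] at *
  rw [hterm]
  exact W.smul_mem _ (hpow k)

end GJaux

/-- For a `J`-invariant subspace `W ⊆ ℝ^d` and `v₀ ∈ ℝ^d`, the set
`H = {(w + t·S(tJ)·v₀, t) : w ∈ W, t ∈ ℝ}` is a subgroup of `G(J)` and is closed as a subset
of the underlying space `ℝ^d × ℝ`. -/
theorem GJ.connected_subgroup_closed (d : ℕ) (J : Matrix (Fin d) (Fin d) ℝ)
    (W : Submodule ℝ (Fin d → ℝ)) (hW : ∀ w ∈ W, J.mulVec w ∈ W) (v₀ : Fin d → ℝ) :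
    let H : Set (GJ d J) :=
      {g | ∃ w ∈ W, ∃ t : ℝ, g = ⟨w + t • (matS (t • J)).mulVec v₀, t⟩}
    (∃ H' : Subgroup (GJ d J), (H' : Set (GJ d J)) = H) ∧
      IsClosed ((fun g : GJ d J => (g.v, g.t)) '' H) := by
  intro H
  constructor
  · refine ⟨{ carrier := H
              one_mem' := ⟨0, W.zero_mem, 0, by
                show (⟨0, 0⟩ : GJ d J) = _
                ext <;> simp⟩
              mul_mem' := ?_
              inv_mem' := ?_ }, rfl⟩
    · rintro a b ⟨w₁, hw₁, t, rfl⟩ ⟨w₂, hw₂, s, rfl⟩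
      refine ⟨w₁ + (exp (t • J)).mulVec w₂,
        W.add_mem hw₁ (GJaux.exp_mem J W hW t hw₂), t + s, ?_⟩
      rw [GJ.mul_def]
      ext i
      · show (w₁ + t • (matS (t • J)).mulVec v₀ +
          (exp (t • J)).mulVec (w₂ + s • (matS (s • J)).mulVec v₀)) i =
          (w₁ + (exp (t • J)).mulVec w₂ + (t + s) • (matS ((t + s) • J)).mulVec v₀) i
        rw [Matrix.mulVec_add, GJaux.phi_add J v₀ t s]
        simp only [Pi.add_apply]
        ring
      · rfl
    · rintro a ⟨w, hw, t, rfl⟩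
      refine ⟨-(exp ((-t) • J)).mulVec w,
        W.neg_mem (GJaux.exp_mem J W hW (-t) hw), -t, ?_⟩
      show (⟨-(exp ((-t) • J)).mulVec (w + t • (matS (t • J)).mulVec v₀), -t⟩ : GJ d J) = _
      ext i
      · show (-(exp ((-t) • J)).mulVec (w + t • (matS (t • J)).mulVec v₀)) i =
          (-(exp ((-t) • J)).mulVec w + (-t) • (matS ((-t) • J)).mulVec v₀) i
        rw [GJaux.phi_neg J v₀ t, Matrix.mulVec_add]
        simp only [Pi.add_apply, Pi.neg_apply, neg_add]
      · rfl
  · have himg : ((fun g : GJ d J => (g.v, g.t)) '' H) =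
        (fun p : (Fin d → ℝ) × ℝ => p.1 - p.2 • (matS (p.2 • J)).mulVec v₀) ⁻¹'
          (W : Set (Fin d → ℝ)) := by
      ext p
      constructor
      · rintro ⟨g, ⟨w, hw, t, rfl⟩, rfl⟩
        simpa using hw
      · intro hp
        refine ⟨⟨p.1, p.2⟩, ⟨p.1 - p.2 • (matS (p.2 • J)).mulVec v₀, hp, p.2, ?_⟩, rfl⟩
        ext i
        · show p.1 i = (p.1 - p.2 • (matS (p.2 • J)).mulVec v₀ +
            p.2 • (matS (p.2 • J)).mulVec v₀) i
          simp
        · rfl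
    rw [himg]
    exact (Submodule.closed_of_finiteDimensional W).preimage
      (continuous_fst.sub ((GJaux.phi_cont J v₀).comp continuous_snd))
end
end
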